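/- If R is an SMLL⁰ net in normal form for the reduction relation →, then R contains no cut links (R is cut-free). -/

import Mathlib

/-! # SMLL: multiplicative linear logic with synchronization

Formalization of the proof-structures, correctness criterion, reduction and
multi-token machine (SIAM) of Dal Lago, Faggian, Hasuo, Yoshimizu,
"The Geometry of Synchronization". -/

/-- SMLL formulas (in negation normal form):
`A ::= 1 | ⊥ | X | X⊥ | A ⊗ A | A ⅋ A`. -/
inductive Formula : Type
  | one : Formula
  | bot : Formula
  | var : ℕ → Formula
  | covar : ℕ → Formula
  | tens : Formula → Formula → Formula
  | parr : Formula → Formula → Formula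
  deriving DecidableEq

namespace Formula

/-- Linear negation. -/
def dual : Formula → Formula
  | one => bot
  | bot => one
  | var n => covar n
  | covar n => var n
  | tens A B => parr A.dual B.dual
  | parr A B => tens A.dual B.dual

/-- Positive formulas: `P ::= 1 | P ⊗ P`. -/
inductive Positive : Formula → Prop
  | one : Positive one
  | tens {A B : Formula} : Positive A → Positive B → Positive (tens A B)

/-- Negative formulas: `N ::= ⊥ | N ⅋ N`. -/
inductive Negative : Formula → Prop
  | bot : Negative bot
  | parr {A B : Formula} : Negative A → Negative B → Negative (parr A B)

/-- A formula is polarized when it is positive or negative. -/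
def Polarized (A : Formula) : Prop := Positive A ∨ Negative A

/-- Whether `⊥` occurs in a formula. -/
def hasBotB : Formula → Bool
  | one => false
  | bot => true
  | var _ => false
  | covar _ => false
  | tens A B => hasBotB A || hasBotB B
  | parr A B => hasBotB A || hasBotB B

/-- Addresses of occurrences inside a formula: `false` = left, `true` = right. -/
abbrev Addr := List Bool

/-- Subformula at a given address (if the address is meaningful). -/
def sub : Formula → Addr → Option Formula
  | A, [] => some A
  | tens A _, false :: m => sub A m
  | tens _ B, true :: m => sub B m
  | parr A _, false :: m => sub A m
  | parr _ B, true :: m => sub B m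
  | _, _ :: _ => none

def IsAtom : Formula → Prop
  | one => True
  | bot => True
  | var _ => True
  | covar _ => True
  | tens _ _ => False
  | parr _ _ => False

/-- `m` is the address of an occurrence of an atom in `A`. -/
def AtomOcc (A : Formula) (m : Addr) : Prop := ∃ a, sub A m = some a ∧ IsAtom a

/-- The atom occurrence at `m` in `A` is positive (it is `1` or `X`). -/
def PosOcc (A : Formula) (m : Addr) : Prop :=
  ∃ a, sub A m = some a ∧ (a = one ∨ ∃ n, a = var n)

/-- The atom occurrence at `m` in `A` is negative (it is `⊥` or `X⊥`). -/
def NegOcc (A : Formula) (m : Addr) : Prop :=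
  ∃ a, sub A m = some a ∧ (a = bot ∨ ∃ n, a = covar n)

theorem NegOcc.atomOcc {A : Formula} {m : Addr} (h : NegOcc A m) : AtomOcc A m := by
  obtain ⟨a, ha, h⟩ := h
  refine ⟨a, ha, ?_⟩
  rcases h with rfl | ⟨n, rfl⟩ <;> trivial

theorem PosOcc.atomOcc {A : Formula} {m : Addr} (h : PosOcc A m) : AtomOcc A m := by
  obtain ⟨a, ha, h⟩ := h
  refine ⟨a, ha, ?_⟩
  rcases h with rfl | ⟨n, rfl⟩ <;> trivial

end Formula

/-- The sorts of links of an SMLL structure. -/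
inductive LinkSort : Type
  | ax | cut | tens | parr | one | bot | sync
  deriving DecidableEq

/-- An SMLL proof-structure (with boxes): a finite directed multigraph whose
edges are typed by formulas and whose nodes are links.  Every edge is the
conclusion of exactly one link (its `src`); it is the premiss of the link
`tgt`, if any (edges with no target are the conclusions of the structure).
`pIdx` indexes an edge among the premisses of its target (for `⊗`/`⅋`-links:
`0` = left, `1` = right; for sync links it pairs premisses with conclusions);
`cIdx` indexes an edge among the conclusions of its source (for sync links,
the `i`-th conclusion corresponds to the `i`-th premiss).  Each `bot`-link is
the lock of a box; `box n` is the innermost box containing the node `n` and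
`boxes n` is the set of all boxes containing `n`. -/
structure Struct : Type 1 where
  Edge : Type
  Node : Type
  edgeFintype : Fintype Edge
  nodeFintype : Fintype Node
  edgeDecEq : DecidableEq Edge
  nodeDecEq : DecidableEq Node
  typ : Edge → Formula
  sort : Node → LinkSort
  src : Edge → Node
  tgt : Edge → Option Node
  pIdx : Edge → ℕ
  cIdx : Edge → ℕ
  box : Node → Option Node
  boxes : Node → Finset Node

attribute [instance] Struct.edgeFintype Struct.nodeFintype
attribute [instance] Struct.edgeDecEq Struct.nodeDecEq

namespace Struct

variable (S : Struct)

/-- The conclusions of a link. -/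
def concls (n : S.Node) : Finset S.Edge := Finset.univ.filter fun e => S.src e = n

/-- The premisses of a link. -/
def prems (n : S.Node) : Finset S.Edge := Finset.univ.filter fun e => S.tgt e = some n

/-- The conclusions of the structure. -/
def IsConcl (e : S.Edge) : Prop := S.tgt e = none

/-- Well-formedness of an SMLL structure: the constraints that the sort of a
link induces on the number and the types of its premisses and conclusions,
together with the coherence of the nesting of boxes. -/
def WF : Prop :=
  (∀ n, S.sort n = .ax → S.prems n = ∅ ∧
    ∃ e f, e ≠ f ∧ S.concls n = {e, f} ∧ S.typ f = (S.typ e).dual) ∧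
  (∀ n, S.sort n = .cut → S.concls n = ∅ ∧
    ∃ e f, e ≠ f ∧ S.prems n = {e, f} ∧ S.typ f = (S.typ e).dual) ∧
  (∀ n, S.sort n = .tens → ∃ e f g, e ≠ f ∧ S.prems n = {e, f} ∧
    S.pIdx e = 0 ∧ S.pIdx f = 1 ∧ S.concls n = {g} ∧
    S.typ g = .tens (S.typ e) (S.typ f)) ∧
  (∀ n, S.sort n = .parr → ∃ e f g, e ≠ f ∧ S.prems n = {e, f} ∧
    S.pIdx e = 0 ∧ S.pIdx f = 1 ∧ S.concls n = {g} ∧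
    S.typ g = .parr (S.typ e) (S.typ f)) ∧
  (∀ n, S.sort n = .one → S.prems n = ∅ ∧ ∃ e, S.concls n = {e} ∧ S.typ e = .one) ∧
  (∀ n, S.sort n = .bot → S.prems n = ∅ ∧ ∃ e, S.concls n = {e} ∧ S.typ e = .bot) ∧
  (∀ n, S.sort n = .sync →
    (∀ e ∈ S.prems n, (S.typ e).Polarized) ∧
    (∀ e ∈ S.prems n, ∃! f, f ∈ S.concls n ∧ S.cIdx f = S.pIdx e) ∧
    (∀ f ∈ S.concls n, ∃! e, e ∈ S.prems n ∧ S.pIdx e = S.cIdx f) ∧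
    (∀ e ∈ S.prems n, ∀ f ∈ S.concls n, S.cIdx f = S.pIdx e → S.typ f = S.typ e)) ∧
  (∀ n b, b ∈ S.boxes n → S.sort b = .bot) ∧
  (∀ n, S.box n = none → S.boxes n = ∅) ∧
  (∀ n b, S.box n = some b → b ∉ S.boxes b ∧ S.boxes n = insert b (S.boxes b)) ∧
  (∀ e n, S.tgt e = some n → S.boxes n ⊆ S.boxes (S.src e))

/-- `b` is the representative of the node `m` in the level-`ℓ` graph (the
graph in which each box strictly below level `ℓ` is collapsed to a single
box-node, identified with its `bot`-link).  For `ℓ = none` this is the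
`0`-graph. -/
def RepAt (ℓ : Option S.Node) (m b : S.Node) : Prop :=
  (S.box m = ℓ ∧ b = m) ∨ (b ∈ S.boxes m ∧ S.box b = ℓ)

/-- Edge `e` joins the nodes `u` and `v` (undirectedly) in the level-`ℓ` graph. -/
def ConnectsAt (ℓ : Option S.Node) (e : S.Edge) (u v : S.Node) : Prop :=
  ∃ t, S.tgt e = some t ∧ (S.box t = ℓ ∨ S.box (S.src e) = ℓ) ∧
    ((S.RepAt ℓ (S.src e) u ∧ S.RepAt ℓ t v) ∨
     (S.RepAt ℓ (S.src e) v ∧ S.RepAt ℓ t u))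

/-- The out-edges of a sync link are its positive conclusions and its negative
premisses. -/
def OutEdgeOf (l : S.Node) (e : S.Edge) : Prop :=
  S.sort l = .sync ∧
  ((S.src e = l ∧ (S.typ e).Positive) ∨ (S.tgt e = some l ∧ (S.typ e).Negative))

/-- There is a switching cycle in the level-`ℓ` graph: a cyclic undirected
simple path which uses at most one of the two premisses of each `⅋`-link and
at most one out-edge of each sync link. -/
def SwitchingCycleAt (ℓ : Option S.Node) : Prop :=
  ∃ (k : ℕ) (v : Fin (k + 1) → S.Node) (e : Fin (k + 1) → S.Edge),
    Function.Injective v ∧ Function.Injective e ∧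
    (∀ i, S.ConnectsAt ℓ (e i) (v i) (v (i + 1))) ∧
    (∀ p, S.sort p = .parr → Set.Subsingleton {i | S.tgt (e i) = some p}) ∧
    (∀ l, S.sort l = .sync → Set.Subsingleton {i | S.OutEdgeOf l (e i)})

/-- Correctness criterion: no switching cycle in the `0`-graph, and,
recursively, no switching cycle in the graph of the content of any box. -/
def Correct : Prop := ∀ ℓ : Option S.Node, ¬ S.SwitchingCycleAt ℓ

/-- A net is a well-formed correct structure. -/
def IsNet : Prop := S.WF ∧ S.Correct

/-! ## Sync paths and hereditary conclusions -/

/-- One step of a sync path: entering a sync link on a premiss and coming out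
on the corresponding conclusion. -/
def SyncStepE (e f : S.Edge) : Prop :=
  ∃ l, S.sort l = .sync ∧ S.tgt e = some l ∧ S.src f = l ∧ S.cIdx f = S.pIdx e

/-- `e` is a hereditary conclusion of the link `l`: there is a sync path from
a conclusion of `l` to `e`. -/
def HereditaryConcl (l : S.Node) (e : S.Edge) : Prop :=
  ∃ f, S.src f = l ∧ Relation.ReflTransGen S.SyncStepE f e

/-- The edge emerges from a box: its source is a `bot`-link (the edge is the
lock of a box) or lies inside some box. -/
def FromBox (e : S.Edge) : Prop := S.sort (S.src e) = .bot ∨ S.box (S.src e) ≠ none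

/-- `e` is a hereditary conclusion of a box. -/
def HereditaryBoxConcl (e : S.Edge) : Prop :=
  ∃ f, S.FromBox f ∧ Relation.ReflTransGen S.SyncStepE f e

/-- A ready cut: a cut at depth 0 neither of whose premisses is a hereditary
conclusion of a box. -/
def ReadyCut (c : S.Node) : Prop :=
  S.sort c = .cut ∧ S.box c = none ∧ ∀ e ∈ S.prems c, ¬ S.HereditaryBoxConcl e

/-! ## Polarized paths and the order on links -/

/-- A node is polarized when all of its conclusions are polarized. -/
def PolarizedNode (n : S.Node) : Prop := ∀ e ∈ S.concls n, (S.typ e).Polarized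

/-- A single step of a polarized path from link `a` to link `b` along the
polarized edge `e`: downwards on positive edges, upwards on negative edges,
connecting polarized nodes and never entering boxes. -/
def PolStep (e : S.Edge) (a b : S.Node) : Prop :=
  S.box a = none ∧ S.box b = none ∧ S.PolarizedNode a ∧ S.PolarizedNode b ∧
  (((S.typ e).Positive ∧ S.src e = a ∧ S.tgt e = some b) ∨
   ((S.typ e).Negative ∧ S.tgt e = some a ∧ S.src e = b))

/-- `a ≺ b` : there is a (simple) polarized path from `a` to `b`. -/
def prec (a b : S.Node) : Prop :=
  ∃ (k : ℕ) (v : Fin (k + 2) → S.Node) (e : Fin (k + 1) → S.Edge),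
    v 0 = a ∧ v (Fin.last _) = b ∧
    Function.Injective v ∧ Function.Injective e ∧
    ∀ i : Fin (k + 1), S.PolStep (e i) (v i.castSucc) (v i.succ)

/-- SMLL⁰ structures: no unit links (hence no boxes). -/
def UnitFree : Prop := ∀ n : S.Node, S.sort n ≠ .one ∧ S.sort n ≠ .bot

/-- Closed structures: no `⊥` occurs in the conclusions. -/
def Closed : Prop := ∀ e : S.Edge, S.tgt e = none → (S.typ e).hasBotB = false

end Struct

/-! ## Reduction -/

/-- A partial injection `j` whose (some-)range is exactly `X`. -/
def PInjOnto {α β : Type*} (j : α → Option β) (X : Set β) : Prop :=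
  (∀ a a' b, j a = some b → j a' = some b → a = a') ∧
  (∀ a b, j a = some b → b ∈ X) ∧
  (∀ b ∈ X, ∃ a, j a = some b)

/-- `j` is total. -/
def JTotal {α β : Type*} (j : α → Option β) : Prop := ∀ a, j a ≠ none

/-- The structures `Q` and `R` agree, along the correspondences `jN`, `jE`,
on all edges outside `XE` and all nodes outside `XN`. -/
def AgreesOn (Q R : Struct) (jN : Q.Node → Option R.Node)
    (jE : Q.Edge → Option R.Edge) (XE : Set R.Edge) (XN : Set R.Node) : Prop :=
  (∀ x y, jE x = some y → y ∉ XE →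
    Q.typ x = R.typ y ∧ jN (Q.src x) = some (R.src y) ∧
    (Q.tgt x).bind jN = R.tgt y ∧ Q.pIdx x = R.pIdx y ∧ Q.cIdx x = R.cIdx y) ∧
  (∀ n m, jN n = some m → m ∉ XN →
    Q.sort n = R.sort m ∧ (Q.box n).bind jN = R.box m ∧
    (∀ b b', jN b = some b' → (b ∈ Q.boxes n ↔ b' ∈ R.boxes m)))

/-- The `ax/cut` step: a cut between a conclusion `v` of an axiom `a` and the
dual premiss is removed together with the axiom; the remaining conclusion `u`
of the axiom and the remaining premiss `q` of the cut are merged. -/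
def AxCutStep (R Q : Struct) : Prop :=
  ∃ (a c : R.Node) (v u q : R.Edge),
    R.sort a = .ax ∧ R.sort c = .cut ∧ R.box a = none ∧ R.box c = none ∧
    v ≠ u ∧ v ≠ q ∧ u ≠ q ∧
    R.concls a = {v, u} ∧ R.prems c = {v, q} ∧
    ∃ (jN : Q.Node → Option R.Node) (jE : Q.Edge → Option R.Edge),
      JTotal jN ∧ JTotal jE ∧
      PInjOnto jN {n | n ≠ a ∧ n ≠ c} ∧
      PInjOnto jE {x | x ≠ v ∧ x ≠ u} ∧
      AgreesOn Q R jN jE {q} ∅ ∧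
      (∀ x, jE x = some q →
        Q.typ x = R.typ q ∧ jN (Q.src x) = some (R.src q) ∧
        (Q.tgt x).bind jN = R.tgt u ∧ Q.pIdx x = R.pIdx u ∧ Q.cIdx x = R.cIdx q)

/-- The `⊗/⅋` step: a cut between `A ⊗ B` and `A⊥ ⅋ B⊥` is replaced by two
cuts between the respective premisses. -/
def TensParrStep (R Q : Struct) : Prop :=
  ∃ (c t p : R.Node) (s s' a1 a2 b1 b2 : R.Edge),
    R.sort c = .cut ∧ R.sort t = .tens ∧ R.sort p = .parr ∧
    R.box c = none ∧ R.box t = none ∧ R.box p = none ∧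
    s ≠ s' ∧ R.prems c = {s, s'} ∧ R.concls t = {s} ∧ R.concls p = {s'} ∧
    a1 ≠ a2 ∧ R.prems t = {a1, a2} ∧ R.pIdx a1 = 0 ∧ R.pIdx a2 = 1 ∧
    b1 ≠ b2 ∧ R.prems p = {b1, b2} ∧ R.pIdx b1 = 0 ∧ R.pIdx b2 = 1 ∧
    ∃ (jN : Q.Node → Option R.Node) (jE : Q.Edge → Option R.Edge) (c' : Q.Node),
      JTotal jE ∧
      PInjOnto jN {n | n ≠ t ∧ n ≠ p} ∧
      PInjOnto jE {x | x ≠ s ∧ x ≠ s'} ∧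
      jN c' = none ∧ (∀ n, jN n = none → n = c') ∧
      Q.sort c' = .cut ∧ Q.box c' = none ∧ Q.boxes c' = ∅ ∧
      AgreesOn Q R jN jE {a1, a2, b1, b2} ∅ ∧
      (∀ x y, jE x = some y → y = a1 ∨ y = b1 →
        Q.typ x = R.typ y ∧ jN (Q.src x) = some (R.src y) ∧
        (Q.tgt x).bind jN = some c ∧ Q.cIdx x = R.cIdx y) ∧
      (∀ x y, jE x = some y → y = a2 ∨ y = b2 →
        Q.typ x = R.typ y ∧ jN (Q.src x) = some (R.src y) ∧
        Q.tgt x = some c' ∧ Q.cIdx x = R.cIdx y)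

/-- Commutation of a sync link with a `⊗` or `⅋` link: the sync link acting
on the conclusion `z` of the multiplicative link `m` (with corresponding sync
conclusion `w`) is pushed above `m`, now acting on the two premisses `x`, `y`
of `m` via two fresh sync positions (indices `i₁`, `i₂`) with fresh edges
`x'`, `y'`. -/
def SyncMultStep (R Q : Struct) : Prop :=
  ∃ (l m : R.Node) (z w x y : R.Edge) (i₁ i₂ : ℕ),
    R.sort l = .sync ∧ (R.sort m = .tens ∨ R.sort m = .parr) ∧
    R.box l = none ∧ R.box m = none ∧
    R.src z = m ∧ R.tgt z = some l ∧ R.src w = l ∧ R.cIdx w = R.pIdx z ∧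
    x ≠ y ∧ R.prems m = {x, y} ∧ R.pIdx x = 0 ∧ R.pIdx y = 1 ∧
    i₁ ≠ i₂ ∧
    (∀ e, R.tgt e = some l → R.pIdx e ≠ i₁ ∧ R.pIdx e ≠ i₂) ∧
    (∀ e, R.src e = l → R.cIdx e ≠ i₁ ∧ R.cIdx e ≠ i₂) ∧
    ∃ (jN : Q.Node → Option R.Node) (jE : Q.Edge → Option R.Edge)
      (l' m' : Q.Node) (x' y' : Q.Edge),
      JTotal jN ∧ PInjOnto jN Set.univ ∧
      PInjOnto jE {e | e ≠ z} ∧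
      jN l' = some l ∧ jN m' = some m ∧
      x' ≠ y' ∧ jE x' = none ∧ jE y' = none ∧ (∀ e, jE e = none → e = x' ∨ e = y') ∧
      AgreesOn Q R jN jE {x, y, w} ∅ ∧
      (∀ e, jE e = some x →
        Q.typ e = R.typ x ∧ jN (Q.src e) = some (R.src x) ∧
        Q.tgt e = some l' ∧ Q.pIdx e = i₁ ∧ Q.cIdx e = R.cIdx x) ∧
      (∀ e, jE e = some y →
        Q.typ e = R.typ y ∧ jN (Q.src e) = some (R.src y) ∧
        Q.tgt e = some l' ∧ Q.pIdx e = i₂ ∧ Q.cIdx e = R.cIdx y) ∧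
      (∀ e, jE e = some w →
        Q.typ e = R.typ w ∧ Q.src e = m' ∧
        (Q.tgt e).bind jN = R.tgt w ∧ Q.pIdx e = R.pIdx w ∧ Q.cIdx e = R.cIdx w) ∧
      (Q.typ x' = R.typ x ∧ Q.src x' = l' ∧ Q.tgt x' = some m' ∧
        Q.pIdx x' = 0 ∧ Q.cIdx x' = i₁) ∧
      (Q.typ y' = R.typ y ∧ Q.src y' = l' ∧ Q.tgt y' = some m' ∧
        Q.pIdx y' = 1 ∧ Q.cIdx y' = i₂)

/-- Commutation of a sync link with an axiom: a sync link acting on a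
positive conclusion `u` of an axiom (with corresponding conclusion `u'`) is
moved to the axiom's other conclusion `v` (of type `P⊥`), with a fresh sync
position of index `j` and fresh edge `v'`. -/
def SyncAxStep (R Q : Struct) : Prop :=
  ∃ (l a : R.Node) (u u' v : R.Edge) (j : ℕ),
    R.sort l = .sync ∧ R.sort a = .ax ∧ R.box l = none ∧ R.box a = none ∧
    (R.typ u).Positive ∧ u ≠ v ∧ R.concls a = {u, v} ∧
    R.tgt u = some l ∧ R.src u' = l ∧ R.cIdx u' = R.pIdx u ∧ u' ≠ u ∧ u' ≠ v ∧
    (∀ e, R.tgt e = some l → R.pIdx e ≠ j) ∧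
    (∀ e, R.src e = l → R.cIdx e ≠ j) ∧
    ∃ (jN : Q.Node → Option R.Node) (jE : Q.Edge → Option R.Edge)
      (l' a' : Q.Node) (v' : Q.Edge),
      JTotal jN ∧ PInjOnto jN Set.univ ∧ PInjOnto jE {e | e ≠ u} ∧
      jN l' = some l ∧ jN a' = some a ∧
      jE v' = none ∧ (∀ e, jE e = none → e = v') ∧
      AgreesOn Q R jN jE {u', v} ∅ ∧
      (∀ e, jE e = some u' →
        Q.typ e = R.typ u' ∧ Q.src e = a' ∧ Q.cIdx e = R.cIdx u ∧
        (Q.tgt e).bind jN = R.tgt u' ∧ Q.pIdx e = R.pIdx u') ∧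
      (∀ e, jE e = some v →
        Q.typ e = R.typ v ∧ Q.src e = a' ∧ Q.cIdx e = R.cIdx v ∧
        Q.tgt e = some l' ∧ Q.pIdx e = j) ∧
      (Q.typ v' = R.typ v ∧ Q.src v' = l' ∧ Q.cIdx v' = j ∧
        (Q.tgt v').bind jN = R.tgt v ∧ Q.pIdx v' = R.pIdx v)

/-- Commutation of a sync link with a cut: a sync link acting on the premiss
`d'` (of negative type `P⊥`) of a cut is moved to the other premiss `q`. -/
def SyncCutStep (R Q : Struct) : Prop :=
  ∃ (l c : R.Node) (d d' q : R.Edge) (j : ℕ),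
    R.sort l = .sync ∧ R.sort c = .cut ∧ R.box l = none ∧ R.box c = none ∧
    (R.typ d').Negative ∧
    R.src d' = l ∧ R.tgt d' = some c ∧ R.tgt d = some l ∧ R.pIdx d = R.cIdx d' ∧
    d' ≠ q ∧ d ≠ q ∧ d ≠ d' ∧ R.prems c = {d', q} ∧
    (∀ e, R.tgt e = some l → R.pIdx e ≠ j) ∧
    (∀ e, R.src e = l → R.cIdx e ≠ j) ∧
    ∃ (jN : Q.Node → Option R.Node) (jE : Q.Edge → Option R.Edge)
      (l' c' : Q.Node) (q' : Q.Edge),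
      JTotal jN ∧ PInjOnto jN Set.univ ∧ PInjOnto jE {e | e ≠ d'} ∧
      jN l' = some l ∧ jN c' = some c ∧
      jE q' = none ∧ (∀ e, jE e = none → e = q') ∧
      AgreesOn Q R jN jE {d, q} ∅ ∧
      (∀ e, jE e = some d →
        Q.typ e = R.typ d ∧ jN (Q.src e) = some (R.src d) ∧ Q.cIdx e = R.cIdx d ∧
        Q.tgt e = some c' ∧ Q.pIdx e = R.pIdx d') ∧
      (∀ e, jE e = some q →
        Q.typ e = R.typ q ∧ jN (Q.src e) = some (R.src q) ∧ Q.cIdx e = R.cIdx q ∧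
        Q.tgt e = some l' ∧ Q.pIdx e = j) ∧
      (Q.typ q' = R.typ q ∧ Q.src q' = l' ∧ Q.cIdx q' = j ∧
        Q.tgt q' = some c' ∧ Q.pIdx q' = R.pIdx q)

/-- Sync elimination: a sync link all of whose premisses are conclusions of
`one`-links is erased, merging each premiss with its corresponding
conclusion. -/
def SyncElimStep (R Q : Struct) : Prop :=
  ∃ l : R.Node, R.sort l = .sync ∧ R.box l = none ∧
    (∀ e ∈ R.prems l, R.sort (R.src e) = .one) ∧
    ∃ (jN : Q.Node → Option R.Node) (jE : Q.Edge → Option R.Edge),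
      JTotal jN ∧ JTotal jE ∧
      PInjOnto jN {n | n ≠ l} ∧
      PInjOnto jE {e | R.src e ≠ l} ∧
      AgreesOn Q R jN jE {e | R.tgt e = some l} ∅ ∧
      (∀ x e f, jE x = some e → R.tgt e = some l → R.src f = l →
        R.cIdx f = R.pIdx e →
        Q.typ x = R.typ e ∧ jN (Q.src x) = some (R.src e) ∧
        (Q.tgt x).bind jN = R.tgt f ∧ Q.pIdx x = R.pIdx f ∧ Q.cIdx x = R.cIdx e)

/-- The `one/⊥` step (box opening): a cut between the conclusion `o` of a
`one`-link `n₁` and the lock `k` of a box `b` removes the cut, the `one`-link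
and the `bot`-link, and opens the box. -/
def OneBotStep (R Q : Struct) : Prop :=
  ∃ (c n₁ b : R.Node) (o k : R.Edge),
    R.sort c = .cut ∧ R.sort n₁ = .one ∧ R.sort b = .bot ∧
    R.box c = none ∧ R.box n₁ = none ∧ R.box b = none ∧
    o ≠ k ∧ R.prems c = {o, k} ∧ R.src o = n₁ ∧ R.src k = b ∧
    ∃ (jN : Q.Node → Option R.Node) (jE : Q.Edge → Option R.Edge),
      JTotal jN ∧ JTotal jE ∧
      PInjOnto jN {n | n ≠ c ∧ n ≠ n₁ ∧ n ≠ b} ∧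
      PInjOnto jE {e | e ≠ o ∧ e ≠ k} ∧
      (∀ x e, jE x = some e →
        Q.typ x = R.typ e ∧ jN (Q.src x) = some (R.src e) ∧
        (Q.tgt x).bind jN = R.tgt e ∧ Q.pIdx x = R.pIdx e ∧ Q.cIdx x = R.cIdx e) ∧
      (∀ n m, jN n = some m →
        Q.sort n = R.sort m ∧
        (∀ b₀ b₀', jN b₀ = some b₀' → (b₀ ∈ Q.boxes n ↔ b₀' ∈ R.boxes m ∧ b₀' ≠ b)) ∧
        (R.box m = some b → Q.box n = none) ∧
        (R.box m ≠ some b → (Q.box n).bind jN = R.box m))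

/-- The sync-commutation and sync-elimination steps. -/
def SyncRed (R Q : Struct) : Prop :=
  SyncMultStep R Q ∨ SyncAxStep R Q ∨ SyncCutStep R Q ∨ SyncElimStep R Q

/-- The reduction relation `→` on SMLL structures (applied at depth 0 only). -/
def Step (R Q : Struct) : Prop :=
  AxCutStep R Q ∨ TensParrStep R Q ∨ SyncRed R Q ∨ OneBotStep R Q

/-- Isomorphism of structures. -/
def Isom (R Q : Struct) : Prop :=
  ∃ (en : R.Node ≃ Q.Node) (ee : R.Edge ≃ Q.Edge),
    (∀ e, Q.typ (ee e) = R.typ e) ∧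
    (∀ e, Q.src (ee e) = en (R.src e)) ∧
    (∀ e, Q.tgt (ee e) = (R.tgt e).map en) ∧
    (∀ e, Q.pIdx (ee e) = R.pIdx e) ∧
    (∀ e, Q.cIdx (ee e) = R.cIdx e) ∧
    (∀ n, Q.sort (en n) = R.sort n) ∧
    (∀ n, Q.box (en n) = (R.box n).map en) ∧
    (∀ n, Q.boxes (en n) = (R.boxes n).image en)

/-! ## The SIAM: a synchronous interaction abstract machine -/

namespace Struct

variable (S : Struct)

/-- The value of a token: either an occurrence of an atom on an edge, or a
position `(e, i)` on the lock `e` of a box (`BOTBOX`). -/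
inductive PosVal (S : Struct) : Type
  | atom : S.Edge → Formula.Addr → PosVal S
  | lock : S.Edge → ℕ → PosVal S

/-- Initial positions: negative atom occurrences in the conclusions. -/
def InitPos (p : S.Edge × Formula.Addr) : Prop :=
  S.tgt p.1 = none ∧ Formula.NegOcc (S.typ p.1) p.2

/-- Final positions: positive atom occurrences in the conclusions. -/
def FinPos (p : S.Edge × Formula.Addr) : Prop :=
  S.tgt p.1 = none ∧ Formula.PosOcc (S.typ p.1) p.2

/-- One positions: conclusions of `one`-links. -/
def OnePos (p : S.Edge × Formula.Addr) : Prop :=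
  S.sort (S.src p.1) = .one ∧ p.2 = []

/-- Valid token values: genuine atom occurrences, or positions on the lock of
a box. -/
def ValidVal : PosVal S → Prop
  | .atom e m => Formula.AtomOcc (S.typ e) m
  | .lock e _ => S.sort (S.src e) = .bot

end Struct

/-- A state of the SIAM machine `M_S`: a (partial) function from
`INIT(S) ∪ L` (with `L ⊆ ONES(S)`) to the positions of `S`; it records, for
each token, its origin and its current position. -/
structure SState (S : Struct) where
  f : S.Edge × Formula.Addr → Option (Struct.PosVal S)
  dom_subset : ∀ p, f p ≠ none → S.InitPos p ∨ S.OnePos p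
  init_total : ∀ p, S.InitPos p → f p ≠ none
  val_valid : ∀ p v, f p = some v → S.ValidVal v

namespace Struct

variable (S : Struct)

/-- The box `b` is unlocked in state `T`: some token sits on its lock. -/
def Unlocked (T : SState S) (b : S.Node) : Prop :=
  ∃ p e i, T.f p = some (.lock e i) ∧ S.src e = b

/-- A link is active: all the boxes containing it are unlocked. -/
def Active (T : SState S) (n : S.Node) : Prop :=
  ∀ b ∈ S.boxes n, S.Unlocked T b

end Struct

open Classical in
/-- The initial state `I_S`: the identity on the initial positions. -/
noncomputable def initState (S : Struct) : SState S where
  f := fun p => if S.InitPos p then some (.atom p.1 p.2) else none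
  dom_subset := by
    intro p hp
    by_cases h : S.InitPos p
    · exact Or.inl h
    · simp [h] at hp
  init_total := by intro p hp; simp [hp]
  val_valid := by
    intro p v hv
    by_cases h : S.InitPos p
    · simp only [if_pos h, Option.some.injEq] at hv
      subst hv
      exact h.2.atomOcc
    · simp [h] at hv

/-- The transition relation of the SIAM.  Tokens on negative atom occurrences
move upwards, tokens on positive atom occurrences move downwards; all tokens
cross a sync link simultaneously, when each of its in-edges is saturated;
active `one`-links may spawn a token; a token reaching the lock of a box
unlocks it.  Tokens may only cross active links (so they can enter a box only
when it is unlocked). -/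
inductive STrans (S : Struct) : SState S → SState S → Prop
  | axUp {T T' : SState S} {p : S.Edge × Formula.Addr} {e e' : S.Edge}
      {m : Formula.Addr} {a : S.Node} :
      T.f p = some (.atom e m) →
      Formula.NegOcc (S.typ e) m →
      S.src e = a → S.sort a = .ax → S.Active T a →
      S.src e' = a → e' ≠ e →
      (∀ q, q ≠ p → T'.f q = T.f q) →
      T'.f p = some (.atom e' m) →
      STrans S T T'
  | cutDown {T T' : SState S} {p : S.Edge × Formula.Addr} {e e' : S.Edge}
      {m : Formula.Addr} {c : S.Node} :
      T.f p = some (.atom e m) →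
      Formula.PosOcc (S.typ e) m →
      S.tgt e = some c → S.sort c = .cut → S.Active T c →
      S.tgt e' = some c → e' ≠ e →
      (∀ q, q ≠ p → T'.f q = T.f q) →
      T'.f p = some (.atom e' m) →
      STrans S T T'
  | multDown {T T' : SState S} {p : S.Edge × Formula.Addr} {e g : S.Edge}
      {m : Formula.Addr} {n : S.Node} {b : Bool} :
      T.f p = some (.atom e m) →
      Formula.PosOcc (S.typ e) m →
      S.tgt e = some n → (S.sort n = .tens ∨ S.sort n = .parr) → S.Active T n →
      S.src g = n →
      S.pIdx e = (if b then 1 else 0) →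
      (∀ q, q ≠ p → T'.f q = T.f q) →
      T'.f p = some (.atom g (b :: m)) →
      STrans S T T'
  | multUp {T T' : SState S} {p : S.Edge × Formula.Addr} {e g : S.Edge}
      {m : Formula.Addr} {n : S.Node} {b : Bool} :
      T.f p = some (.atom g (b :: m)) →
      Formula.NegOcc (S.typ g) (b :: m) →
      S.src g = n → (S.sort n = .tens ∨ S.sort n = .parr) → S.Active T n →
      S.tgt e = some n →
      S.pIdx e = (if b then 1 else 0) →
      (∀ q, q ≠ p → T'.f q = T.f q) →
      T'.f p = some (.atom e m) →
      STrans S T T'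
  | lockTok {T T' : SState S} {p : S.Edge × Formula.Addr} {e : S.Edge}
      {b' : S.Node} :
      T.f p = some (.atom e []) →
      S.typ e = .bot →
      S.src e = b' → S.sort b' = .bot → S.Active T b' →
      (∀ q, q ≠ p → T'.f q = T.f q) →
      T'.f p = some (.lock e 0) →
      STrans S T T'
  | oneSpawn {T T' : SState S} {n : S.Node} {e : S.Edge} :
      S.sort n = .one → S.Active T n → S.src e = n →
      T.f (e, []) = none →
      (∀ q, q ≠ (e, []) → T'.f q = T.f q) →
      T'.f (e, []) = some (.atom e []) →
      STrans S T T'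
  | syncCross {T T' : SState S} {l : S.Node} :
      S.sort l = .sync → S.Active T l →
      (∃ q e m, T.f q = some (.atom e m) ∧
        ((S.tgt e = some l ∧ (S.typ e).Positive) ∨
         (S.src e = l ∧ (S.typ e).Negative))) →
      (∀ e, ((S.tgt e = some l ∧ (S.typ e).Positive) ∨
             (S.src e = l ∧ (S.typ e).Negative)) →
        ∀ m, Formula.AtomOcc (S.typ e) m → ∃ q, T.f q = some (.atom e m)) →
      (∀ q e m, T.f q = some (.atom e m) → S.tgt e = some l → (S.typ e).Positive →
        ∃ e', S.src e' = l ∧ S.cIdx e' = S.pIdx e ∧ T'.f q = some (.atom e' m)) →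
      (∀ q e m, T.f q = some (.atom e m) → S.src e = l → (S.typ e).Negative →
        ∃ e', S.tgt e' = some l ∧ S.pIdx e' = S.cIdx e ∧ T'.f q = some (.atom e' m)) →
      (∀ q, (∀ e m, T.f q = some (.atom e m) →
          ¬(S.tgt e = some l ∧ (S.typ e).Positive) ∧
          ¬(S.src e = l ∧ (S.typ e).Negative)) →
        T'.f q = T.f q) →
      STrans S T T'

/-- A final state: its image consists of all the final positions together
with positions on the locks of boxes. -/
def SState.Final {S : Struct} (T : SState S) : Prop :=
  (∀ q v, T.f q = some v →
    (∃ e m, v = .atom e m ∧ S.FinPos (e, m)) ∨ (∃ e i, v = .lock e i)) ∧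
  (∀ e m, S.FinPos (e, m) → ∃ q, T.f q = some (.atom e m))

/-- The machine of `S` deadlocks: some maximal transition sequence from the
initial state ends in a non-final state. -/
def Deadlocks (S : Struct) : Prop :=
  ∃ T : SState S, Relation.ReflTransGen (STrans S) (initState S) T ∧
    (∀ T', ¬ STrans S T T') ∧ ¬ T.Final

/-- The machine of `S` is deadlock free: every maximal transition sequence
from the initial state ends in a final state. -/
def DeadlockFree (S : Struct) : Prop :=
  ∀ T : SState S, Relation.ReflTransGen (STrans S) (initState S) T →
    (∀ T', ¬ STrans S T T') → T.Final

/-! ## The closure of a net -/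

/-- A structure with a designated (main) conclusion. -/
structure PNet : Type 1 where
  S : Struct
  main : S.Edge

/-- The net consisting of a single `one`-link. -/
def oneNet : PNet where
  S :=
    { Edge := Unit
      Node := Unit
      edgeFintype := inferInstance
      nodeFintype := inferInstance
      edgeDecEq := inferInstance
      nodeDecEq := inferInstance
      typ := fun _ => .one
      sort := fun _ => .one
      src := fun _ => ()
      tgt := fun _ => none
      pIdx := fun _ => 0
      cIdx := fun _ => 0
      box := fun _ => none
      boxes := fun _ => ∅ }
  main := ()

/-- The net consisting of a single axiom of conclusions `A⊥, A`, with main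
conclusion `A`. -/
def axNet (A : Formula) : PNet where
  S :=
    { Edge := Bool
      Node := Unit
      edgeFintype := inferInstance
      nodeFintype := inferInstance
      edgeDecEq := inferInstance
      nodeDecEq := inferInstance
      typ := fun e => if e then A else A.dual
      sort := fun _ => .ax
      src := fun _ => ()
      tgt := fun _ => none
      pIdx := fun _ => 0
      cIdx := fun e => if e then 1 else 0
      box := fun _ => none
      boxes := fun _ => ∅ }
  main := true

/-- Joining the main conclusions of two nets by a binary link of sort `s`
and conclusion type `C`. -/
def joinNet (s : LinkSort) (C : Formula) (P Q : PNet) : PNet where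
  S :=
    { Edge := Option (P.S.Edge ⊕ Q.S.Edge)
      Node := Option (P.S.Node ⊕ Q.S.Node)
      edgeFintype := inferInstance
      nodeFintype := inferInstance
      edgeDecEq := inferInstance
      nodeDecEq := inferInstance
      typ := fun e =>
        match e with
        | none => C
        | some (.inl x) => P.S.typ x
        | some (.inr y) => Q.S.typ y
      sort := fun n =>
        match n with
        | none => s
        | some (.inl x) => P.S.sort x
        | some (.inr y) => Q.S.sort y
      src := fun e =>
        match e with
        | none => none
        | some (.inl x) => some (.inl (P.S.src x))
        | some (.inr y) => some (.inr (Q.S.src y))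
      tgt := fun e =>
        match e with
        | none => none
        | some (.inl x) =>
            if x = P.main then some none
            else (P.S.tgt x).map fun n => some (.inl n)
        | some (.inr y) =>
            if y = Q.main then some none
            else (Q.S.tgt y).map fun n => some (.inr n)
      pIdx := fun e =>
        match e with
        | none => 0
        | some (.inl x) => if x = P.main then 0 else P.S.pIdx x
        | some (.inr y) => if y = Q.main then 1 else Q.S.pIdx y
      cIdx := fun e =>
        match e with
        | none => 0
        | some (.inl x) => P.S.cIdx x
        | some (.inr y) => Q.S.cIdx y
      box := fun n =>
        match n with
        | none => none
        | some (.inl x) => (P.S.box x).map fun m => some (.inl m)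
        | some (.inr y) => (Q.S.box y).map fun m => some (.inr m)
      boxes := fun n =>
        match n with
        | none => ∅
        | some (.inl x) => (P.S.boxes x).image fun m => some (.inl m)
        | some (.inr y) => (Q.S.boxes y).image fun m => some (.inr m) }
  main := none

/-- The net `R°(A)`, by induction on `A`: it has conclusions `Γ, A` with no
occurrence of `⊥` in `Γ`, and main conclusion `A`. -/
def circNet : Formula → PNet
  | .one => oneNet
  | .bot => axNet .bot
  | .var n => axNet (.var n)
  | .covar n => axNet (.covar n)
  | .tens A B => joinNet .tens (.tens A B) (circNet A) (circNet B)
  | .parr A B => joinNet .parr (.parr A B) (circNet A) (circNet B)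

/-- The conclusions of `R` containing an occurrence of `⊥`. -/
abbrev BadC (R : Struct) :=
  {e : R.Edge // R.tgt e = none ∧ (R.typ e).hasBotB = true}

/-- The closure `R̂` of `R`: each conclusion `A` of `R` containing `⊥` is cut
against the main conclusion of a copy of `R°(A⊥)`. -/
def netClosure (R : Struct) : Struct where
  Edge := R.Edge ⊕ Σ e : BadC R, (circNet (R.typ e.val).dual).S.Edge
  Node := R.Node ⊕ ((Σ e : BadC R, (circNet (R.typ e.val).dual).S.Node) ⊕ BadC R)
  edgeFintype := inferInstance
  nodeFintype := inferInstance
  edgeDecEq := inferInstance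
  nodeDecEq := inferInstance
  typ := fun e =>
    match e with
    | .inl e => R.typ e
    | .inr ⟨b, x⟩ => (circNet (R.typ b.val).dual).S.typ x
  sort := fun n =>
    match n with
    | .inl n => R.sort n
    | .inr (.inl ⟨b, x⟩) => (circNet (R.typ b.val).dual).S.sort x
    | .inr (.inr _) => .cut
  src := fun e =>
    match e with
    | .inl e => .inl (R.src e)
    | .inr ⟨b, x⟩ => .inr (.inl ⟨b, (circNet (R.typ b.val).dual).S.src x⟩)
  tgt := fun e =>
    match e with
    | .inl e =>
        if h : R.tgt e = none ∧ (R.typ e).hasBotB = true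
        then some (.inr (.inr ⟨e, h⟩))
        else (R.tgt e).map Sum.inl
    | .inr ⟨b, x⟩ =>
        if x = (circNet (R.typ b.val).dual).main
        then some (.inr (.inr b))
        else ((circNet (R.typ b.val).dual).S.tgt x).map fun n => .inr (.inl ⟨b, n⟩)
  pIdx := fun e =>
    match e with
    | .inl e => R.pIdx e
    | .inr ⟨b, x⟩ =>
        if x = (circNet (R.typ b.val).dual).main then 1
        else (circNet (R.typ b.val).dual).S.pIdx x
  cIdx := fun e =>
    match e with
    | .inl e => R.cIdx e
    | .inr ⟨b, x⟩ => (circNet (R.typ b.val).dual).S.cIdx x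
  box := fun n =>
    match n with
    | .inl n => (R.box n).map Sum.inl
    | .inr (.inl ⟨b, x⟩) =>
        ((circNet (R.typ b.val).dual).S.box x).map fun m => .inr (.inl ⟨b, m⟩)
    | .inr (.inr _) => none
  boxes := fun n =>
    match n with
    | .inl n => (R.boxes n).image Sum.inl
    | .inr (.inl ⟨b, x⟩) =>
        ((circNet (R.typ b.val).dual).S.boxes x).image fun m => .inr (.inl ⟨b, m⟩)
    | .inr (.inr _) => ∅

open Formula
namespace Struct
variable {R : Struct}



lemma mem_prems {e : R.Edge} {n : R.Node} : e ∈ R.prems n ↔ R.tgt e = some n := by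
  simp [Struct.prems]

lemma mem_concls {e : R.Edge} {n : R.Node} : e ∈ R.concls n ↔ R.src e = n := by
  simp [Struct.concls]

lemma pos_not_neg {A : Formula} (hp : A.Positive) : ¬ A.Negative := by
  intro hn; cases hp <;> cases hn

lemma dual_pos_neg {A : Formula} (hp : A.Positive) : A.dual.Negative := by
  induction hp with
  | one => exact .bot
  | tens _ _ ih1 ih2 => exact .parr ih1 ih2

lemma dual_neg_pos {A : Formula} (hn : A.Negative) : A.dual.Positive := by
  induction hn with
  | bot => exact .one
  | parr _ _ ih1 ih2 => exact .tens ih1 ih2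

lemma boxes_empty (hWF : R.WF) (h0 : R.UnitFree) (n : R.Node) : R.boxes n = ∅ := by
  obtain ⟨-, -, -, -, -, -, -, hb1, -, -, -⟩ := hWF
  ext b
  simp only [Finset.notMem_empty, iff_false]
  intro hb
  exact (h0 b).2 (hb1 n b hb)

lemma box_none (hWF : R.WF) (h0 : R.UnitFree) (n : R.Node) : R.box n = none := by
  obtain ⟨-, -, -, -, -, -, -, hb1, -, hb3, -⟩ := hWF
  cases hbox : R.box n with
  | none => rfl
  | some b =>
    exfalso
    have h2 := (hb3 n b hbox).2
    have : b ∈ R.boxes n := h2 ▸ Finset.mem_insert_self _ _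
    exact (h0 b).2 (hb1 n b this)

lemma repAt_iff (hWF : R.WF) (h0 : R.UnitFree) {m b : R.Node} :
    R.RepAt none m b ↔ b = m := by
  unfold Struct.RepAt
  simp [box_none hWF h0, boxes_empty hWF h0]

lemma not_src_cut (hWF : R.WF) {x : R.Edge} {c : R.Node} (hc : R.sort c = .cut) :
    R.src x ≠ c := by
  intro h
  have := (hWF.2.1 c hc).1
  have : x ∈ R.concls c := mem_concls.2 h
  simp_all

lemma not_tgt_ax (hWF : R.WF) {x : R.Edge} {a : R.Node} (ha : R.sort a = .ax) :
    R.tgt x ≠ some a := by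
  intro h
  have := (hWF.1 a ha).1
  have : x ∈ R.prems a := mem_prems.2 h
  simp_all

/-- Conclusions of sync links are polarized. -/
lemma sync_concl_polarized (hWF : R.WF) {l : R.Node} (hl : R.sort l = .sync)
    {f : R.Edge} (hf : R.src f = l) : (R.typ f).Polarized := by
  obtain ⟨-, -, -, -, -, -, hsync, -⟩ := hWF
  obtain ⟨hpol, -, hcp, htyp⟩ := hsync l hl
  obtain ⟨e, ⟨he, hidx⟩, -⟩ := hcp f (mem_concls.2 hf)
  have := htyp e he f (mem_concls.2 hf) hidx.symm
  rw [this]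
  exact hpol e he

/-- The matching premiss of a sync conclusion. -/
lemma sync_prem (hWF : R.WF) {l : R.Node} (hl : R.sort l = .sync)
    {f : R.Edge} (hf : R.src f = l) :
    ∃ e, R.tgt e = some l ∧ R.pIdx e = R.cIdx f ∧ R.typ f = R.typ e := by
  obtain ⟨-, -, -, -, -, -, hsync, -⟩ := hWF
  obtain ⟨-, -, hcp, htyp⟩ := hsync l hl
  obtain ⟨e, ⟨he, hidx⟩, -⟩ := hcp f (mem_concls.2 hf)
  exact ⟨e, mem_prems.1 he, hidx, htyp e he f (mem_concls.2 hf) hidx.symm⟩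




lemma connectsAt_symm {ℓ : Option R.Node} {e : R.Edge} {u v : R.Node}
    (h : R.ConnectsAt ℓ e u v) : R.ConnectsAt ℓ e v u := by
  obtain ⟨t, h1, h2, h3⟩ := h
  exact ⟨t, h1, h2, h3.symm⟩

lemma no_two_cycle (hC : R.Correct) {e₁ e₂ : R.Edge} {u v : R.Node}
    (he : e₁ ≠ e₂) (hn : u ≠ v)
    (c₁ : R.ConnectsAt none e₁ u v) (c₂ : R.ConnectsAt none e₂ u v)
    (hp : ∀ p, R.sort p = .parr → ¬(R.tgt e₁ = some p ∧ R.tgt e₂ = some p))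
    (hs : ∀ l, R.sort l = .sync → ¬(R.OutEdgeOf l e₁ ∧ R.OutEdgeOf l e₂)) :
    False := by
  apply hC none
  refine ⟨1, ![u, v], ![e₁, e₂], ?_, ?_, ?_, ?_, ?_⟩
  · intro i j h
    fin_cases i <;> fin_cases j <;> simp_all
  · intro i j h
    fin_cases i <;> fin_cases j <;> simp_all
  · intro i
    fin_cases i
    · simpa using c₁
    · simpa using connectsAt_symm c₂
  · intro p hpp i hi j hj
    fin_cases i <;> fin_cases j <;> simp_all <;> exact absurd ⟨hi, hj⟩ (by have := hp p hpp; tauto)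
  · intro l hl i hi j hj
    fin_cases i <;> fin_cases j <;> simp_all <;> exact absurd ⟨hi, hj⟩ (by have := hs l hl; tauto)





lemma chain_contra (hWF : R.WF) (h0 : R.UnitFree) (hC : R.Correct)
    (hbox : ∀ n, R.box n = none) (hboxes : ∀ n, R.boxes n = ∅)
    (step : ∀ f : R.Edge, R.sort (R.src f) = .sync → (R.typ f).Positive →
      ∃ g, R.tgt g = some (R.src f) ∧ R.sort (R.src g) = .sync ∧ (R.typ g).Positive)
    {f₀ : R.Edge} (h₀ : R.sort (R.src f₀) = .sync) (hp₀ : (R.typ f₀).Positive) :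
    False := by
  classical
  choose g hg1 hg2 hg3 using step
  set nxt : R.Edge → R.Edge := fun f =>
    if h : R.sort (R.src f) = .sync ∧ (R.typ f).Positive then g f h.1 h.2 else f
    with hnxt
  set F : ℕ → R.Edge := fun n => nxt^[n] f₀ with hF
  have good : ∀ n, R.sort (R.src (F n)) = .sync ∧ (R.typ (F n)).Positive := by
    intro n
    induction n with
    | zero => exact ⟨h₀, hp₀⟩
    | succ n ih =>
      have : F (n+1) = nxt (F n) := Function.iterate_succ_apply' nxt n f₀
      rw [this, hnxt]
      simp only [dif_pos ih]
      exact ⟨hg2 _ _ _, hg3 _ _ _⟩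
  have key : ∀ n, R.tgt (F (n+1)) = some (R.src (F n)) := by
    intro n
    have h1 : F (n+1) = nxt (F n) := Function.iterate_succ_apply' nxt n f₀
    rw [h1, hnxt]
    simp only [dif_pos (good n)]
    exact hg1 _ _ _
  set l : ℕ → R.Node := fun n => R.src (F n) with hl
  obtain ⟨x, y, hxy, hlxy⟩ := Finite.exists_ne_map_eq_of_infinite l
  have hP : ∃ j, ∃ i, i < j ∧ l i = l j := by
    rcases lt_or_gt_of_ne hxy with h | h
    · exact ⟨y, x, h, hlxy⟩
    · exact ⟨x, y, h, hlxy.symm⟩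
  set j₀ := Nat.find hP with hj₀
  obtain ⟨i₀, hi₀, heq⟩ := Nat.find_spec hP
  have distinct : ∀ p q, p < q → q < j₀ → l p ≠ l q := by
    intro p q hpq hq hpqeq
    exact Nat.find_min hP hq ⟨p, hpq, hpqeq⟩
  obtain ⟨K, hK⟩ : ∃ K, i₀ + K + 1 = j₀ := ⟨j₀ - i₀ - 1, by omega⟩
  set v : Fin (K+1) → R.Node := fun t => l (i₀ + t.val) with hv
  set e : Fin (K+1) → R.Edge := fun t => F (i₀ + t.val + 1) with he
  have hlt : ∀ t : Fin (K+1), i₀ + t.val < j₀ := by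
    intro t; have := t.isLt; omega
  have vinj : Function.Injective v := by
    intro t t' h
    by_contra hne
    have hne' : t.val ≠ t'.val := fun h' => hne (Fin.ext h')
    rcases lt_or_gt_of_ne hne' with h' | h'
    · exact distinct _ _ (by omega) (hlt t') h
    · exact distinct _ _ (by omega) (hlt t) h.symm
  have hsucc : ∀ t : Fin (K+1), v (t + 1) = l (i₀ + t.val + 1) := by
    intro t
    have hgoal : v (t + 1) = l (i₀ + (t + 1 : Fin (K+1)).val) := rfl
    rw [hgoal, Fin.val_add_one]
    by_cases htv : t = Fin.last K
    · rw [if_pos htv]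
      simp only [Nat.add_zero]
      rw [heq]
      congr 1
      rw [htv]
      simp [Fin.last]
      omega
    · rw [if_neg htv, ← Nat.add_assoc]
  have hsrc : ∀ t : Fin (K+1), R.src (e t) = v (t + 1) := by
    intro t
    rw [hsucc t, he, hl]
  have einj : Function.Injective e := by
    intro t t' h
    have : v (t + 1) = v (t' + 1) := by rw [← hsrc t, ← hsrc t', h]
    have := vinj this
    exact add_right_cancel this
  apply hC none
  refine ⟨K, v, e, vinj, einj, ?_, ?_, ?_⟩
  · intro t
    refine ⟨l (i₀ + t.val), key _, Or.inl (hbox _), Or.inr ⟨?_, ?_⟩⟩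
    · exact Or.inl ⟨hbox _, (hsrc t).symm⟩
    · exact Or.inl ⟨hbox _, rfl⟩
  · intro p hpp i hi j hj
    exfalso
    have : R.tgt (e i) = some (l (i₀ + i.val)) := key _
    rw [Set.mem_setOf_eq, this, Option.some_inj] at hi
    have : R.sort p = .sync := hi ▸ (good (i₀ + i.val)).1
    rw [hpp] at this
    exact absurd this (by simp)
  · intro l₀ hl₀ i hi j hj
    have hout : ∀ t : Fin (K+1), R.OutEdgeOf l₀ (e t) → v (t + 1) = l₀ := by
      intro t ht
      obtain ⟨-, ht⟩ := ht
      rcases ht with ⟨h1, -⟩ | ⟨-, h2⟩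
      · rw [← hsrc t, h1]
      · exact absurd h2 (pos_not_neg (good (i₀ + t.val + 1)).2)
    have := (hout i hi).trans (hout j hj).symm
    have := vinj this
    exact add_right_cancel this





/-- The reduct of an `ax/cut` step. -/
def axcutQ (R : Struct) (a c : R.Node) (v u q : R.Edge)
    (hsrc : ∀ x : R.Edge, x ≠ v → x ≠ u → R.src x ≠ a ∧ R.src x ≠ c) : Struct where
  Edge := {x : R.Edge // x ≠ v ∧ x ≠ u}
  Node := {n : R.Node // n ≠ a ∧ n ≠ c}
  edgeFintype := inferInstance
  nodeFintype := inferInstance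
  edgeDecEq := inferInstance
  nodeDecEq := inferInstance
  typ := fun x => R.typ x.val
  sort := fun n => R.sort n.val
  src := fun x => ⟨R.src x.val, hsrc x.val x.2.1 x.2.2⟩
  tgt := fun x =>
    (if x.val = q then R.tgt u else R.tgt x.val).bind
      fun n => if h : n ≠ a ∧ n ≠ c then some ⟨n, h⟩ else none
  pIdx := fun x => if x.val = q then R.pIdx u else R.pIdx x.val
  cIdx := fun x => R.cIdx x.val
  box := fun _ => none
  boxes := fun _ => ∅

lemma axcut_contra (hWF : R.WF) (h0 : R.UnitFree) (hC : R.Correct)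
    (hnf : ∀ Q : Struct, ¬ Step R Q) {c : R.Node} (hc : R.sort c = .cut)
    {v q : R.Edge} (hvq : v ≠ q) (hprems : R.prems c = {v, q})
    (hax : R.sort (R.src v) = .ax) : False := by
  classical
  set a := R.src v with ha
  have hbox : ∀ n, R.box n = none := box_none hWF h0
  have hboxes : ∀ n, R.boxes n = ∅ := boxes_empty hWF h0
  have hnta : ∀ x : R.Edge, R.tgt x ≠ some a := fun x => not_tgt_ax hWF hax
  have hnsc : ∀ x : R.Edge, R.src x ≠ c := fun x => not_src_cut hWF hc
  have htgtv : R.tgt v = some c := by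
    have : v ∈ R.prems c := by rw [hprems]; simp
    exact mem_prems.1 this
  have htgtq : R.tgt q = some c := by
    have : q ∈ R.prems c := by rw [hprems]; simp
    exact mem_prems.1 this
  have hac : a ≠ c := by
    intro h; rw [← h, hax] at hc; exact absurd hc.symm (by simp)
  -- the other conclusion u of the axiom
  obtain ⟨-, e0, f0, hef, hconcl, -⟩ := hWF.1 a hax
  have hv0 : v ∈ R.concls a := mem_concls.2 rfl
  rw [hconcl] at hv0
  obtain ⟨u, hvu, hconcl'⟩ : ∃ u, v ≠ u ∧ R.concls a = {v, u} := by
    rcases Finset.mem_insert.1 hv0 with h | h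
    · exact ⟨f0, h ▸ hef, by rw [hconcl, h]⟩
    · rw [Finset.mem_singleton] at h
      exact ⟨e0, h ▸ hef.symm, by rw [hconcl, h, Finset.pair_comm]⟩
  have hsrcu : R.src u = a := by
    have : u ∈ R.concls a := by rw [hconcl']; simp
    exact mem_concls.1 this
  have hconn : ∀ x : R.Edge, R.src x = a → R.tgt x = some c → R.ConnectsAt none x a c :=
    fun x h1 h2 => ⟨c, h2, Or.inl (hbox c), Or.inl ⟨Or.inl ⟨hbox _, h1.symm⟩, Or.inl ⟨hbox c, rfl⟩⟩⟩
  have hnout : ∀ x : R.Edge, R.src x = a → R.tgt x = some c →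
      ∀ l, R.sort l = .sync → ¬ R.OutEdgeOf l x := by
    rintro x h1 h2 l hl ⟨-, hout⟩
    rcases hout with ⟨h3, -⟩ | ⟨h3, -⟩
    · rw [h1] at h3; rw [← h3, hax] at hl; exact absurd hl (by simp)
    · rw [h2] at h3; rw [Option.some_inj] at h3; rw [← h3, hc] at hl; exact absurd hl (by simp)
  have huq : u ≠ q := by
    intro h
    subst h
    exact no_two_cycle hC hvu hac (hconn v rfl htgtv) (hconn u hsrcu htgtq)
      (by rintro p hp ⟨h1, -⟩; rw [htgtv, Option.some_inj] at h1; rw [← h1, hc] at hp; simp at hp)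
      (by rintro l hl ⟨h1, -⟩; exact hnout v rfl htgtv l hl h1)
  have hsrcne : ∀ x : R.Edge, x ≠ v → x ≠ u → R.src x ≠ a ∧ R.src x ≠ c := by
    intro x hxv hxu
    refine ⟨?_, hnsc x⟩
    intro h
    have : x ∈ R.concls a := mem_concls.2 h
    rw [hconcl'] at this
    simp only [Finset.mem_insert, Finset.mem_singleton] at this
    tauto
  have htgtne : ∀ x : R.Edge, x ≠ v → x ≠ q → R.tgt x ≠ some c := by
    intro x hxv hxq h
    have : x ∈ R.prems c := mem_prems.2 h
    rw [hprems] at this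
    simp only [Finset.mem_insert, Finset.mem_singleton] at this
    tauto
  have hliftbind : ∀ o : Option R.Node, (∀ n, o = some n → n ≠ a ∧ n ≠ c) →
      (o.bind fun n => if h : n ≠ a ∧ n ≠ c
        then some (⟨n, h⟩ : {n : R.Node // n ≠ a ∧ n ≠ c}) else none).bind
        (fun n : {n : R.Node // n ≠ a ∧ n ≠ c} => some n.val) = o := by
    intro o ho
    cases o with
    | none => rfl
    | some n => simp [dif_pos (ho n rfl)]
  apply hnf (axcutQ R a c v u q hsrcne)
  left
  refine ⟨a, c, v, u, q, hax, hc, hbox a, hbox c, hvu, hvq, huq, hconcl', hprems,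
    fun n => some n.val, fun x => some x.val, fun n => by simp, fun x => by simp,
    ⟨?_, ?_, ?_⟩, ⟨?_, ?_, ?_⟩, ⟨?_, ?_⟩, ?_⟩
  · intro n n' b h h'
    rw [Option.some_inj] at h h'
    exact Subtype.ext (h.trans h'.symm)
  · intro n b h
    rw [Option.some_inj] at h
    exact h ▸ n.2
  · intro b hb
    exact ⟨⟨b, hb.1, hb.2⟩, rfl⟩
  · intro x x' b h h'
    rw [Option.some_inj] at h h'
    exact Subtype.ext (h.trans h'.symm)
  · intro x b h
    rw [Option.some_inj] at h
    exact h ▸ x.2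
  · intro b hb
    exact ⟨⟨b, hb.1, hb.2⟩, rfl⟩
  · -- AgreesOn, edge part
    intro x y hxy hyq
    rw [Option.some_inj] at hxy
    subst hxy
    rw [Set.mem_singleton_iff] at hyq
    refine ⟨rfl, rfl, ?_, ?_, rfl⟩
    · show ((if x.val = q then R.tgt u else R.tgt x.val).bind _).bind _ = R.tgt x.val
      rw [if_neg hyq]
      apply hliftbind
      intro n hn
      refine ⟨?_, ?_⟩
      · intro h; exact hnta x.val (h ▸ hn)
      · intro h; exact htgtne x.val x.2.1 hyq (h ▸ hn)
    · show (if x.val = q then R.pIdx u else R.pIdx x.val) = R.pIdx x.val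
      rw [if_neg hyq]
  · -- AgreesOn, node part
    intro n m hnm _hm
    rw [Option.some_inj] at hnm
    subst hnm
    refine ⟨rfl, ?_, ?_⟩
    · show (none : Option _).bind _ = R.box n.val
      rw [hbox]; rfl
    · intro b b' h
      rw [Option.some_inj] at h
      subst h
      show b ∈ (∅ : Finset _) ↔ b.val ∈ R.boxes n.val
      rw [hboxes]
      simp
  · -- merged edge clause
    intro x hx
    rw [Option.some_inj] at hx
    refine ⟨by show R.typ x.val = R.typ q; rw [hx],
      by show some (R.src x.val) = some (R.src q); rw [hx], ?_, ?_,
      by show R.cIdx x.val = R.cIdx q; rw [hx]⟩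
    · show ((if x.val = q then R.tgt u else R.tgt x.val).bind _).bind _ = R.tgt u
      rw [if_pos hx]
      apply hliftbind
      intro n hn
      refine ⟨fun h => hnta u (h ▸ hn), fun h => htgtne u (Ne.symm hvu) huq (h ▸ hn)⟩
    · show (if x.val = q then R.pIdx u else R.pIdx x.val) = R.pIdx u
      rw [if_pos hx]

/-- The reduct of a `⊗/⅋` step. -/
def tensparrQ (R : Struct) (t p c : R.Node) (s s' a1 b1 a2 b2 : R.Edge)
    (hsrc : ∀ x : R.Edge, x ≠ s → x ≠ s' → R.src x ≠ t ∧ R.src x ≠ p)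
    (hctp : c ≠ t ∧ c ≠ p) : Struct where
  Edge := {x : R.Edge // x ≠ s ∧ x ≠ s'}
  Node := Option {n : R.Node // n ≠ t ∧ n ≠ p}
  edgeFintype := inferInstance
  nodeFintype := inferInstance
  edgeDecEq := inferInstance
  nodeDecEq := inferInstance
  typ := fun x => R.typ x.val
  sort := fun n => match n with
    | none => .cut
    | some n => R.sort n.val
  src := fun x => some ⟨R.src x.val, hsrc x.val x.2.1 x.2.2⟩
  tgt := fun x =>
    if x.val = a1 ∨ x.val = b1 then some (some ⟨c, hctp⟩)
    else if x.val = a2 ∨ x.val = b2 then some none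
    else (R.tgt x.val).bind fun n =>
      if h : n ≠ t ∧ n ≠ p then some (some ⟨n, h⟩) else none
  pIdx := fun x => R.pIdx x.val
  cIdx := fun x => R.cIdx x.val
  box := fun _ => none
  boxes := fun _ => ∅

lemma tensparr_contra (hWF : R.WF) (h0 : R.UnitFree)
    (hnf : ∀ Q : Struct, ¬ Step R Q) {c : R.Node} (hc : R.sort c = .cut)
    {s s' : R.Edge} (hss' : s ≠ s') (hprems : R.prems c = {s, s'})
    (ht : R.sort (R.src s) = .tens) (hp : R.sort (R.src s') = .parr) : False := by
  classical
  set t := R.src s with hts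
  set p := R.src s' with hps
  have hbox : ∀ n, R.box n = none := box_none hWF h0
  have hboxes : ∀ n, R.boxes n = ∅ := boxes_empty hWF h0
  obtain ⟨a1, a2, g, ha12, hprems_t, hpa1, hpa2, hconcl_t, -⟩ := hWF.2.2.1 t ht
  obtain ⟨b1, b2, g', hb12, hprems_p, hpb1, hpb2, hconcl_p, -⟩ := hWF.2.2.2.1 p hp
  have hsg : s = g := by
    have : s ∈ R.concls t := mem_concls.2 rfl
    rw [hconcl_t, Finset.mem_singleton] at this; exact this
  have hsg' : s' = g' := by
    have : s' ∈ R.concls p := mem_concls.2 rfl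
    rw [hconcl_p, Finset.mem_singleton] at this; exact this
  rw [← hsg] at hconcl_t
  rw [← hsg'] at hconcl_p
  have htgts : R.tgt s = some c := mem_prems.1 (by rw [hprems]; simp)
  have htgts' : R.tgt s' = some c := mem_prems.1 (by rw [hprems]; simp)
  have hct : c ≠ t := fun h => by rw [← h, hc] at ht; simp at ht
  have hcp : c ≠ p := fun h => by rw [← h, hc] at hp; simp at hp
  have htp : t ≠ p := fun h => by rw [h, hp] at ht; simp at ht
  have hta1 : R.tgt a1 = some t := mem_prems.1 (by rw [hprems_t]; simp)
  have hta2 : R.tgt a2 = some t := mem_prems.1 (by rw [hprems_t]; simp)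
  have htb1 : R.tgt b1 = some p := mem_prems.1 (by rw [hprems_p]; simp)
  have htb2 : R.tgt b2 = some p := mem_prems.1 (by rw [hprems_p]; simp)
  have hab : ∀ x y : R.Edge, R.tgt x = some t → R.tgt y = some p → x ≠ y := by
    intro x y hx hy h
    rw [h, hy] at hx
    exact htp (Option.some_inj.1 hx).symm
  have hane : ∀ x : R.Edge, R.tgt x = some t → x ≠ s ∧ x ≠ s' := by
    intro x hx
    constructor <;> intro h <;> rw [h] at hx
    · rw [htgts] at hx; exact hct (Option.some_inj.1 hx)
    · rw [htgts'] at hx; exact hct (Option.some_inj.1 hx)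
  have hbne : ∀ x : R.Edge, R.tgt x = some p → x ≠ s ∧ x ≠ s' := by
    intro x hx
    constructor <;> intro h <;> rw [h] at hx
    · rw [htgts] at hx; exact hcp (Option.some_inj.1 hx)
    · rw [htgts'] at hx; exact hcp (Option.some_inj.1 hx)
  have hsrcne : ∀ x : R.Edge, x ≠ s → x ≠ s' → R.src x ≠ t ∧ R.src x ≠ p := by
    intro x h1 h2
    constructor <;> intro h
    · have : x ∈ R.concls t := mem_concls.2 h
      rw [hconcl_t, Finset.mem_singleton] at this; exact h1 this
    · have : x ∈ R.concls p := mem_concls.2 h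
      rw [hconcl_p, Finset.mem_singleton] at this; exact h2 this
  have htgtne : ∀ x : R.Edge, x ∉ ({a1, a2} : Finset R.Edge) → R.tgt x ≠ some t := by
    intro x hx h
    exact hx (hprems_t ▸ mem_prems.2 h)
  have htgtne' : ∀ x : R.Edge, x ∉ ({b1, b2} : Finset R.Edge) → R.tgt x ≠ some p := by
    intro x hx h
    exact hx (hprems_p ▸ mem_prems.2 h)
  apply hnf (tensparrQ R t p c s s' a1 b1 a2 b2 hsrcne ⟨hct, hcp⟩)
  right; left
  refine ⟨c, t, p, s, s', a1, a2, b1, b2, hc, ht, hp, hbox c, hbox t, hbox p,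
    hss', hprems, hconcl_t, hconcl_p, ha12, hprems_t, hpa1, hpa2,
    hb12, hprems_p, hpb1, hpb2,
    Option.map Subtype.val, fun x => some x.val, none,
    fun x => by simp, ⟨?_, ?_, ?_⟩, ⟨?_, ?_, ?_⟩, rfl, ?_, rfl, rfl, rfl,
    ⟨?_, ?_⟩, ?_, ?_⟩
  · rintro (_ | n) (_ | n') b h h' <;> simp_all
    exact congrArg some (Subtype.ext (h.trans h'.symm))
  · rintro (_ | n) b h
    · simp at h
    · simp only [Option.map_some, Option.some_inj] at h
      exact h ▸ ⟨n.2.1, n.2.2⟩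
  · intro b hb
    exact ⟨some ⟨b, hb.1, hb.2⟩, rfl⟩
  · intro x x' b h h'
    rw [Option.some_inj] at h h'
    exact Subtype.ext (h.trans h'.symm)
  · intro x b h
    rw [Option.some_inj] at h
    exact h ▸ ⟨x.2.1, x.2.2⟩
  · intro b hb
    exact ⟨⟨b, hb.1, hb.2⟩, rfl⟩
  · rintro (_ | n) h
    · rfl
    · simp at h
  · -- AgreesOn edge part
    intro x y hxy hyS
    rw [Option.some_inj] at hxy
    subst hxy
    simp only [Set.mem_insert_iff, Set.mem_singleton_iff, not_or] at hyS
    obtain ⟨hy1, hy2, hy3, hy4⟩ := hyS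
    refine ⟨rfl, rfl, ?_, rfl, rfl⟩
    show ((if x.val = a1 ∨ x.val = b1 then _ else if x.val = a2 ∨ x.val = b2 then _
      else (R.tgt x.val).bind _).bind (Option.map Subtype.val)) = R.tgt x.val
    rw [if_neg (by tauto), if_neg (by tauto)]
    cases ho : R.tgt x.val with
    | none => rfl
    | some n =>
      have hn : n ≠ t ∧ n ≠ p := by
        constructor <;> intro h <;> subst h
        · exact htgtne x.val (by simp [hy1, hy2]) ho
        · exact htgtne' x.val (by simp [hy3, hy4]) ho
      simp [dif_pos hn]
  · -- AgreesOn node part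
    intro n m hnm _hm
    match n with
    | none => simp at hnm
    | some k =>
      simp only [Option.map_some, Option.some_inj] at hnm
      subst hnm
      refine ⟨rfl, by rw [hbox]; rfl, ?_⟩
      intro b b' h
      show b ∈ (∅ : Finset _) ↔ b' ∈ R.boxes k.val
      rw [hboxes]; simp
  · -- clause for a1 / b1
    intro x y hxy hy
    rw [Option.some_inj] at hxy
    subst hxy
    refine ⟨rfl, rfl, ?_, rfl⟩
    show ((if x.val = a1 ∨ x.val = b1 then some (some ⟨c, _⟩) else _).bind
      (Option.map Subtype.val)) = some c
    rw [if_pos (by tauto)]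
    rfl
  · -- clause for a2 / b2
    intro x y hxy hy
    rw [Option.some_inj] at hxy
    subst hxy
    have h1 : ¬ (x.val = a1 ∨ x.val = b1) := by
      rintro (h' | h') <;> rcases hy with h | h
      · exact ha12 (h'.symm.trans h)
      · exact hab a1 b2 hta1 htb2 (h'.symm.trans h)
      · exact hab a2 b1 hta2 htb1 (h.symm.trans h')
      · exact hb12 (h'.symm.trans h)
    refine ⟨rfl, rfl, ?_, rfl⟩
    show (if x.val = a1 ∨ x.val = b1
        then some (some (⟨c, hct, hcp⟩ : {n : R.Node // n ≠ t ∧ n ≠ p}))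
      else if x.val = a2 ∨ x.val = b2 then some none else (R.tgt x.val).bind fun n =>
        if h : n ≠ t ∧ n ≠ p
        then some (some (⟨n, h⟩ : {n : R.Node // n ≠ t ∧ n ≠ p})) else none) = some none
    rw [if_neg h1, if_pos hy]

/-- Fresh index for sync commutations. -/
noncomputable def freshIdx (R : Struct) : ℕ :=
  (Finset.univ.sup fun e : R.Edge => max (R.pIdx e) (R.cIdx e)) + 1

lemma freshIdx_pIdx (R : Struct) (e : R.Edge) : R.pIdx e ≠ R.freshIdx := by
  have : R.pIdx e ≤ Finset.univ.sup fun e : R.Edge => max (R.pIdx e) (R.cIdx e) :=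
    le_trans (le_max_left _ _)
      (Finset.le_sup (f := fun e : R.Edge => max (R.pIdx e) (R.cIdx e)) (Finset.mem_univ e))
  unfold Struct.freshIdx; omega

lemma freshIdx_cIdx (R : Struct) (e : R.Edge) : R.cIdx e ≠ R.freshIdx := by
  have : R.cIdx e ≤ Finset.univ.sup fun e : R.Edge => max (R.pIdx e) (R.cIdx e) :=
    le_trans (le_max_right _ _)
      (Finset.le_sup (f := fun e : R.Edge => max (R.pIdx e) (R.cIdx e)) (Finset.mem_univ e))
  unfold Struct.freshIdx; omega

/-- The reduct of a sync/cut commutation step. -/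
noncomputable def synccutQ (R : Struct) (l c : R.Node) (d d' q : R.Edge) : Struct where
  Edge := Option {x : R.Edge // x ≠ d'}
  Node := R.Node
  edgeFintype := inferInstance
  nodeFintype := inferInstance
  edgeDecEq := inferInstance
  nodeDecEq := inferInstance
  typ := fun x => match x with
    | none => R.typ q
    | some x => R.typ x.val
  sort := R.sort
  src := fun x => match x with
    | none => l
    | some x => R.src x.val
  tgt := fun x => match x with
    | none => some c
    | some x => if x.val = d then some c else if x.val = q then some l else R.tgt x.val
  pIdx := fun x => match x with
    | none => R.pIdx q
    | some x => if x.val = d then R.pIdx d' else if x.val = q then R.freshIdx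
        else R.pIdx x.val
  cIdx := fun x => match x with
    | none => R.freshIdx
    | some x => R.cIdx x.val
  box := fun _ => none
  boxes := fun _ => ∅

lemma synccut_contra (hWF : R.WF) (h0 : R.UnitFree)
    (hnf : ∀ Q : Struct, ¬ Step R Q) {c : R.Node} (hc : R.sort c = .cut)
    {d' q : R.Edge} (hne : d' ≠ q) (hprems : R.prems c = {d', q})
    (hl : R.sort (R.src d') = .sync) (hneg : (R.typ d').Negative) : False := by
  classical
  set l := R.src d' with hld
  have hbox : ∀ n, R.box n = none := box_none hWF h0
  have hboxes : ∀ n, R.boxes n = ∅ := boxes_empty hWF h0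
  have htgtd' : R.tgt d' = some c := mem_prems.1 (by rw [hprems]; simp)
  have htgtq : R.tgt q = some c := mem_prems.1 (by rw [hprems]; simp)
  obtain ⟨d, htgtd, hpd, -⟩ := sync_prem hWF hl rfl
  have hlc : l ≠ c := fun h => by rw [h, hc] at hl; simp at hl
  have hdq : d ≠ q := fun h => by
    rw [h, htgtq] at htgtd; exact hlc (Option.some_inj.1 htgtd).symm
  have hdd' : d ≠ d' := fun h => by
    rw [h, htgtd'] at htgtd; exact hlc (Option.some_inj.1 htgtd).symm
  have hbind : ∀ o : Option R.Node, o.bind (fun n => some n) = o := by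
    intro o; cases o <;> rfl
  apply hnf (synccutQ R l c d d' q)
  right; right; left; right; right; left
  refine ⟨l, c, d, d', q, R.freshIdx, hl, hc, hbox l, hbox c, hneg, rfl, htgtd',
    htgtd, hpd, hne, hdq, hdd', hprems,
    fun e _ => freshIdx_pIdx R e, fun e _ => freshIdx_cIdx R e,
    fun n => some n, Option.map Subtype.val, l, c, none,
    fun n => by simp, ⟨?_, ?_, ?_⟩, ⟨?_, ?_, ?_⟩, rfl, rfl, rfl, ?_,
    ⟨?_, ?_⟩, ?_, ?_, ⟨rfl, rfl, rfl, rfl, rfl⟩⟩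
  · intro n n' b h h'
    replace h := Option.some.inj h
    replace h' := Option.some.inj h'
    exact h.trans h'.symm
  · intro n b _h
    trivial
  · intro b _
    exact ⟨b, rfl⟩
  · rintro (_ | x) (_ | x') b h h' <;> simp_all
    exact congrArg some (Subtype.ext (h.trans h'.symm))
  · rintro (_ | x) b h
    · simp at h
    · simp only [Option.map_some, Option.some_inj] at h
      exact h ▸ x.2
  · intro b hb
    exact ⟨some ⟨b, hb⟩, rfl⟩
  · rintro (_ | x) h
    · rfl
    · simp at h
  · -- AgreesOn edge part
    rintro (_ | x) y hxy hyS
    · simp at hxy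
    · simp only [Option.map_some, Option.some_inj] at hxy
      subst hxy
      simp only [Set.mem_insert_iff, Set.mem_singleton_iff, not_or] at hyS
      obtain ⟨hy1, hy2⟩ := hyS
      refine ⟨rfl, rfl, ?_, ?_, rfl⟩
      · show ((if x.val = d then some c else if x.val = q then some l
          else R.tgt x.val).bind fun n => some n) = R.tgt x.val
        rw [if_neg hy1, if_neg hy2, hbind]
      · show (if x.val = d then R.pIdx d' else if x.val = q then R.freshIdx
          else R.pIdx x.val) = R.pIdx x.val
        rw [if_neg hy1, if_neg hy2]
  · -- AgreesOn node part
    intro n m hnm _hm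
    replace hnm := Option.some.inj hnm
    subst hnm
    change R.Node at n
    refine ⟨rfl, by rw [hbox]; rfl, ?_⟩
    intro b b' h
    show b ∈ (∅ : Finset _) ↔ b' ∈ R.boxes n
    rw [hboxes]; simp
  · -- clause for d
    rintro (_ | x) h
    · simp at h
    · simp only [Option.map_some, Option.some_inj] at h
      refine ⟨by show R.typ x.val = R.typ d; rw [h],
        by show some (R.src x.val) = some (R.src d); rw [h],
        by show R.cIdx x.val = R.cIdx d; rw [h], ?_, ?_⟩
      · show (if x.val = d then some c else if x.val = q then some l
          else R.tgt x.val) = some c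
        rw [if_pos h]
      · show (if x.val = d then R.pIdx d' else if x.val = q then R.freshIdx
          else R.pIdx x.val) = R.pIdx d'
        rw [if_pos h]
  · -- clause for q
    rintro (_ | x) h
    · simp at h
    · simp only [Option.map_some, Option.some_inj] at h
      refine ⟨by show R.typ x.val = R.typ q; rw [h],
        by show some (R.src x.val) = some (R.src q); rw [h],
        by show R.cIdx x.val = R.cIdx q; rw [h], ?_, ?_⟩
      · show (if x.val = d then some c else if x.val = q then some l
          else R.tgt x.val) = some l
        rw [if_neg (by rw [h]; exact fun hh => hdq hh.symm), if_pos h]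
      · show (if x.val = d then R.pIdx d' else if x.val = q then R.freshIdx
          else R.pIdx x.val) = R.freshIdx
        rw [if_neg (by rw [h]; exact fun hh => hdq hh.symm), if_pos h]

/-- The reduct of a sync/ax commutation step. -/
noncomputable def syncaxQ (R : Struct) (l a : R.Node) (u u' v : R.Edge) : Struct where
  Edge := Option {x : R.Edge // x ≠ u}
  Node := R.Node
  edgeFintype := inferInstance
  nodeFintype := inferInstance
  edgeDecEq := inferInstance
  nodeDecEq := inferInstance
  typ := fun x => match x with
    | none => R.typ v
    | some x => R.typ x.val
  sort := R.sort
  src := fun x => match x with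
    | none => l
    | some x => if x.val = u' then a else R.src x.val
  tgt := fun x => match x with
    | none => R.tgt v
    | some x => if x.val = v then some l else R.tgt x.val
  pIdx := fun x => match x with
    | none => R.pIdx v
    | some x => if x.val = v then R.freshIdx else R.pIdx x.val
  cIdx := fun x => match x with
    | none => R.freshIdx
    | some x => if x.val = u' then R.cIdx u else R.cIdx x.val
  box := fun _ => none
  boxes := fun _ => ∅

lemma syncax_contra (hWF : R.WF) (h0 : R.UnitFree)
    (hnf : ∀ Q : Struct, ¬ Step R Q) {l : R.Node} (hl : R.sort l = .sync)
    {u' : R.Edge} (hsrcu' : R.src u' = l)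
    {u : R.Edge} (htgtu : R.tgt u = some l) (hidx : R.cIdx u' = R.pIdx u)
    (hpos : (R.typ u).Positive) (hax : R.sort (R.src u) = .ax) : False := by
  classical
  set a := R.src u with hau
  have hbox : ∀ n, R.box n = none := box_none hWF h0
  have hboxes : ∀ n, R.boxes n = ∅ := boxes_empty hWF h0
  have hla : l ≠ a := fun h => by rw [h, hax] at hl; simp at hl
  obtain ⟨-, e0, f0, hef, hconcl, -⟩ := hWF.1 a hax
  have hu0 : u ∈ R.concls a := mem_concls.2 rfl
  rw [hconcl] at hu0
  obtain ⟨v, huv, hconcl'⟩ : ∃ v, u ≠ v ∧ R.concls a = {u, v} := by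
    rcases Finset.mem_insert.1 hu0 with h | h
    · exact ⟨f0, h ▸ hef, by rw [hconcl, h]⟩
    · rw [Finset.mem_singleton] at h
      exact ⟨e0, h ▸ hef.symm, by rw [hconcl, h, Finset.pair_comm]⟩
  have hsrcv : R.src v = a := mem_concls.1 (by rw [hconcl']; simp)
  have hu'u : u' ≠ u := fun h => hla (by rw [← hsrcu', h])
  have hu'v : u' ≠ v := fun h => hla (by rw [← hsrcu', h, hsrcv])
  have hbind : ∀ o : Option R.Node, o.bind (fun n => some n) = o := by
    intro o; cases o <;> rfl
  apply hnf (syncaxQ R l a u u' v)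
  right; right; left; right; left
  refine ⟨l, a, u, u', v, R.freshIdx, hl, hax, hbox l, hbox a, hpos, huv, hconcl',
    htgtu, hsrcu', hidx, hu'u, hu'v,
    fun e _ => (freshIdx_pIdx R e), fun e _ => (freshIdx_cIdx R e),
    fun n => some n, Option.map Subtype.val, l, a, none,
    fun n => by simp, ⟨?_, ?_, ?_⟩, ⟨?_, ?_, ?_⟩, rfl, rfl, rfl, ?_,
    ⟨?_, ?_⟩, ?_, ?_, ⟨rfl, rfl, rfl, by exact hbind (R.tgt v), rfl⟩⟩
  · intro n n' b h h'
    replace h := Option.some.inj h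
    replace h' := Option.some.inj h'
    exact h.trans h'.symm
  · intro n b _h
    trivial
  · intro b _
    exact ⟨b, rfl⟩
  · rintro (_ | e) (_ | e') b h h' <;> simp_all
    exact congrArg some (Subtype.ext (h.trans h'.symm))
  · rintro (_ | e) b h
    · simp at h
    · simp only [Option.map_some, Option.some_inj] at h
      exact h ▸ e.2
  · intro b hb
    exact ⟨some ⟨b, hb⟩, rfl⟩
  · rintro (_ | e) h
    · rfl
    · simp at h
  · -- AgreesOn edge part
    rintro (_ | e) y hxy hyS
    · simp at hxy
    · simp only [Option.map_some, Option.some_inj] at hxy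
      subst hxy
      simp only [Set.mem_insert_iff, Set.mem_singleton_iff, not_or] at hyS
      obtain ⟨hy1, hy2⟩ := hyS
      refine ⟨rfl, ?_, ?_, ?_, ?_⟩
      · show some (if e.val = u' then a else R.src e.val) = some (R.src e.val)
        rw [if_neg hy1]
      · show ((if e.val = v then some l else R.tgt e.val).bind fun n => some n)
          = R.tgt e.val
        rw [if_neg hy2, hbind]
      · show (if e.val = v then R.freshIdx else R.pIdx e.val) = R.pIdx e.val
        rw [if_neg hy2]
      · show (if e.val = u' then R.cIdx u else R.cIdx e.val) = R.cIdx e.val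
        rw [if_neg hy1]
  · -- AgreesOn node part
    intro n m hnm _hm
    replace hnm := Option.some.inj hnm
    subst hnm
    change R.Node at n
    refine ⟨rfl, by rw [hbox]; rfl, ?_⟩
    intro b b' h
    show b ∈ (∅ : Finset _) ↔ b' ∈ R.boxes n
    rw [hboxes]; simp
  · -- clause for u'
    rintro (_ | e) h
    · simp at h
    · simp only [Option.map_some, Option.some_inj] at h
      refine ⟨by show R.typ e.val = R.typ u'; rw [h], ?_, ?_, ?_, ?_⟩
      · show (if e.val = u' then a else R.src e.val) = a
        rw [if_pos h]
      · show (if e.val = u' then R.cIdx u else R.cIdx e.val) = R.cIdx u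
        rw [if_pos h]
      · show ((if e.val = v then some l else R.tgt e.val).bind fun n => some n)
          = R.tgt u'
        rw [if_neg (by rw [h]; exact hu'v), hbind, h]
      · show (if e.val = v then R.freshIdx else R.pIdx e.val) = R.pIdx u'
        rw [if_neg (by rw [h]; exact hu'v), h]
  · -- clause for v
    rintro (_ | e) h
    · simp at h
    · simp only [Option.map_some, Option.some_inj] at h
      refine ⟨by show R.typ e.val = R.typ v; rw [h], ?_, ?_, ?_, ?_⟩
      · show (if e.val = u' then a else R.src e.val) = a
        rw [if_neg (by rw [h]; exact fun hh => hu'v hh.symm), h, hsrcv]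
      · show (if e.val = u' then R.cIdx u else R.cIdx e.val) = R.cIdx v
        rw [if_neg (by rw [h]; exact fun hh => hu'v hh.symm), h]
      · show (if e.val = v then some l else R.tgt e.val) = some l
        rw [if_pos h]
      · show (if e.val = v then R.freshIdx else R.pIdx e.val) = R.freshIdx
        rw [if_pos h]

lemma freshIdx_pIdx' (R : Struct) (e : R.Edge) : R.pIdx e ≠ R.freshIdx + 1 := by
  have : R.pIdx e ≤ Finset.univ.sup fun e : R.Edge => max (R.pIdx e) (R.cIdx e) :=
    le_trans (le_max_left _ _)
      (Finset.le_sup (f := fun e : R.Edge => max (R.pIdx e) (R.cIdx e)) (Finset.mem_univ e))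
  unfold Struct.freshIdx; omega

lemma freshIdx_cIdx' (R : Struct) (e : R.Edge) : R.cIdx e ≠ R.freshIdx + 1 := by
  have : R.cIdx e ≤ Finset.univ.sup fun e : R.Edge => max (R.pIdx e) (R.cIdx e) :=
    le_trans (le_max_right _ _)
      (Finset.le_sup (f := fun e : R.Edge => max (R.pIdx e) (R.cIdx e)) (Finset.mem_univ e))
  unfold Struct.freshIdx; omega

/-- The reduct of a sync/multiplicative commutation step. -/
noncomputable def syncmultQ (R : Struct) (l m : R.Node) (z w x y : R.Edge) : Struct where
  Edge := Bool ⊕ {e : R.Edge // e ≠ z}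
  Node := R.Node
  edgeFintype := inferInstance
  nodeFintype := inferInstance
  edgeDecEq := inferInstance
  nodeDecEq := inferInstance
  typ := fun e => match e with
    | .inl true => R.typ x
    | .inl false => R.typ y
    | .inr e => R.typ e.val
  sort := R.sort
  src := fun e => match e with
    | .inl _ => l
    | .inr e => if e.val = w then m else R.src e.val
  tgt := fun e => match e with
    | .inl _ => some m
    | .inr e => if e.val = x ∨ e.val = y then some l else R.tgt e.val
  pIdx := fun e => match e with
    | .inl true => 0
    | .inl false => 1
    | .inr e => if e.val = x then R.freshIdx else if e.val = y then R.freshIdx + 1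
        else R.pIdx e.val
  cIdx := fun e => match e with
    | .inl true => R.freshIdx
    | .inl false => R.freshIdx + 1
    | .inr e => R.cIdx e.val
  box := fun _ => none
  boxes := fun _ => ∅

lemma syncmult_contra (hWF : R.WF) (h0 : R.UnitFree) (hC : R.Correct)
    (hnf : ∀ Q : Struct, ¬ Step R Q) {l : R.Node} (hl : R.sort l = .sync)
    {w : R.Edge} (hsrcw : R.src w = l)
    {z : R.Edge} (htgtz : R.tgt z = some l) (hidx : R.cIdx w = R.pIdx z)
    (hposz : (R.typ z).Positive) (hm : R.sort (R.src z) = .tens) : False := by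
  classical
  set m := R.src z with hmz
  have hbox : ∀ n, R.box n = none := box_none hWF h0
  have hboxes : ∀ n, R.boxes n = ∅ := boxes_empty hWF h0
  have hlm : l ≠ m := fun h => by rw [h, hm] at hl; simp at hl
  obtain ⟨x, y, g, hxy, hprems_m, hpx, hpy, hconcl_m, -⟩ := hWF.2.2.1 m hm
  have hzg : z = g := by
    have : z ∈ R.concls m := mem_concls.2 rfl
    rw [hconcl_m, Finset.mem_singleton] at this; exact this
  rw [← hzg] at hconcl_m
  have htgtx : R.tgt x = some m := mem_prems.1 (by rw [hprems_m]; simp)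
  have htgty : R.tgt y = some m := mem_prems.1 (by rw [hprems_m]; simp)
  have hwz : w ≠ z := fun h => hlm (by rw [← hsrcw, h])
  have hno2 : ∀ b : R.Edge, R.src b = l → R.tgt b = some m → False := by
    intro b h1 h2
    have hzb : z ≠ b := fun h => hlm (by rw [← h1, ← h])
    refine no_two_cycle hC hzb hlm ⟨l, htgtz, Or.inl (hbox l), Or.inr ⟨Or.inl ⟨hbox _, rfl⟩, Or.inl ⟨hbox l, rfl⟩⟩⟩
      ⟨m, h2, Or.inl (hbox m), Or.inl ⟨Or.inl ⟨hbox _, h1.symm⟩, Or.inl ⟨hbox m, rfl⟩⟩⟩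
      ?_ ?_
    · rintro p hp ⟨h3, -⟩
      rw [htgtz, Option.some_inj] at h3
      rw [← h3, hl] at hp; simp at hp
    · rintro l₀ hl₀ ⟨⟨-, h3⟩, -⟩
      rcases h3 with ⟨h4, -⟩ | ⟨h4, h5⟩
      · rw [← h4, hm] at hl₀; simp at hl₀
      · exact pos_not_neg hposz h5
  have hwx : w ≠ x := fun h => hno2 w hsrcw (by rw [h]; exact htgtx)
  have hwy : w ≠ y := fun h => hno2 w hsrcw (by rw [h]; exact htgty)
  have hbind : ∀ o : Option R.Node, o.bind (fun n => some n) = o := by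
    intro o; cases o <;> rfl
  apply hnf (syncmultQ R l m z w x y)
  right; right; left; left
  refine ⟨l, m, z, w, x, y, R.freshIdx, R.freshIdx + 1, hl, Or.inl hm,
    hbox l, hbox m, rfl, htgtz, hsrcw, hidx, hxy, hprems_m, hpx, hpy, by omega,
    fun e _ => ⟨freshIdx_pIdx R e, freshIdx_pIdx' R e⟩,
    fun e _ => ⟨freshIdx_cIdx R e, freshIdx_cIdx' R e⟩,
    fun n => some n,
    (fun e => match e with | .inl _ => none | .inr e => some e.val),
    l, m, .inl true, .inl false,
    fun n => by simp, ⟨?_, ?_, ?_⟩, ⟨?_, ?_, ?_⟩, rfl, rfl,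
    (by intro h; exact Bool.noConfusion (Sum.inl.inj h)), rfl, rfl, ?_,
    ⟨?_, ?_⟩, ?_, ?_, ?_, ⟨rfl, rfl, rfl, rfl, rfl⟩, ⟨rfl, rfl, rfl, rfl, rfl⟩⟩
  · intro n n' b h h'
    replace h := Option.some.inj h
    replace h' := Option.some.inj h'
    exact h.trans h'.symm
  · intro n b _h
    trivial
  · intro b _
    exact ⟨b, rfl⟩
  · rintro (b | e) (b' | e') k h h' <;> simp_all
    exact congrArg Sum.inr (Subtype.ext (h.trans h'.symm))
  · rintro (b | e) k h
    · simp at h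
    · simp only [Option.some_inj] at h
      exact h ▸ e.2
  · intro b hb
    exact ⟨.inr ⟨b, hb⟩, rfl⟩
  · rintro (b | e) h
    · cases b
      · right; rfl
      · left; rfl
    · simp at h
  · -- AgreesOn edge part
    rintro (b | e) k hxy' hyS
    · simp at hxy'
    · simp only [Option.some_inj] at hxy'
      subst hxy'
      simp only [Set.mem_insert_iff, Set.mem_singleton_iff, not_or] at hyS
      obtain ⟨hy1, hy2, hy3⟩ := hyS
      refine ⟨rfl, ?_, ?_, ?_, rfl⟩
      · show some (if e.val = w then m else R.src e.val) = some (R.src e.val)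
        rw [if_neg hy3]
      · show ((if e.val = x ∨ e.val = y then some l else R.tgt e.val).bind
          fun n => some n) = R.tgt e.val
        rw [if_neg (by tauto), hbind]
      · show (if e.val = x then R.freshIdx else if e.val = y then R.freshIdx + 1
          else R.pIdx e.val) = R.pIdx e.val
        rw [if_neg hy1, if_neg hy2]
  · -- AgreesOn node part
    intro n m' hnm _hm
    replace hnm := Option.some.inj hnm
    subst hnm
    change R.Node at n
    refine ⟨rfl, by rw [hbox]; rfl, ?_⟩
    intro b b' h
    show b ∈ (∅ : Finset _) ↔ b' ∈ R.boxes n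
    rw [hboxes]; simp
  · -- clause for x
    rintro (b | e) h
    · cases b <;> simp at h
    · simp only [Option.some_inj] at h
      refine ⟨by show R.typ e.val = R.typ x; rw [h], ?_, ?_, ?_,
        by show R.cIdx e.val = R.cIdx x; rw [h]⟩
      · show some (if e.val = w then m else R.src e.val) = some (R.src x)
        rw [if_neg (by rw [h]; exact fun hh => hwx hh.symm), h]
      · show (if e.val = x ∨ e.val = y then some l else R.tgt e.val) = some l
        rw [if_pos (Or.inl h)]
      · show (if e.val = x then R.freshIdx else if e.val = y then R.freshIdx + 1
          else R.pIdx e.val) = R.freshIdx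
        rw [if_pos h]
  · -- clause for y
    rintro (b | e) h
    · cases b <;> simp at h
    · simp only [Option.some_inj] at h
      refine ⟨by show R.typ e.val = R.typ y; rw [h], ?_, ?_, ?_,
        by show R.cIdx e.val = R.cIdx y; rw [h]⟩
      · show some (if e.val = w then m else R.src e.val) = some (R.src y)
        rw [if_neg (by rw [h]; exact fun hh => hwy hh.symm), h]
      · show (if e.val = x ∨ e.val = y then some l else R.tgt e.val) = some l
        rw [if_pos (Or.inr h)]
      · show (if e.val = x then R.freshIdx else if e.val = y then R.freshIdx + 1
          else R.pIdx e.val) = R.freshIdx + 1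
        rw [if_neg (by rw [h]; exact fun hh => hxy hh.symm), if_pos h]
  · -- clause for w
    rintro (b | e) h
    · cases b <;> simp at h
    · simp only [Option.some_inj] at h
      refine ⟨by show R.typ e.val = R.typ w; rw [h], ?_, ?_, ?_,
        by show R.cIdx e.val = R.cIdx w; rw [h]⟩
      · show (if e.val = w then m else R.src e.val) = m
        rw [if_pos h]
      · show ((if e.val = x ∨ e.val = y then some l else R.tgt e.val).bind
          fun n => some n) = R.tgt w
        rw [if_neg (by rw [h]; rintro (hh | hh); exacts [hwx hh, hwy hh]), hbind, h]
      · show (if e.val = x then R.freshIdx else if e.val = y then R.freshIdx + 1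
          else R.pIdx e.val) = R.pIdx w
        rw [if_neg (by rw [h]; exact hwx), if_neg (by rw [h]; exact hwy), h]

end Struct

open Struct in
theorem smll0_normal_forms_cut_free' (R : Struct) (hWF : R.WF) (hC : R.Correct)
    (h0 : R.UnitFree) (hnf : ∀ Q : Struct, ¬ Step R Q) :
    ∀ n : R.Node, R.sort n ≠ .cut := by
  intro n hn
  have hbox : ∀ m, R.box m = none := box_none hWF h0
  have hboxes : ∀ m, R.boxes m = ∅ := boxes_empty hWF h0
  obtain ⟨-, e, f, hef, hprems, hdual⟩ := hWF.2.1 n hn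
  have key : ∀ p q : R.Edge, p ≠ q → R.prems n = {p, q} →
      R.sort (R.src p) = .tens ∨ R.sort (R.src p) = .parr ∨
      (R.sort (R.src p) = .sync ∧ (R.typ p).Positive) := by
    intro p q hpq hpr
    cases hsp : R.sort (R.src p) with
    | ax => exact (axcut_contra hWF h0 hC hnf hn hpq hpr hsp).elim
    | cut => exact absurd rfl (not_src_cut hWF hsp)
    | one => exact absurd hsp (h0 _).1
    | bot => exact absurd hsp (h0 _).2
    | tens => exact Or.inl rfl
    | parr => exact Or.inr (Or.inl rfl)
    | sync =>
      refine Or.inr (Or.inr ⟨rfl, ?_⟩)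
      rcases sync_concl_polarized hWF hsp rfl with hp | hneg
      · exact hp
      · exact (synccut_contra hWF h0 hnf hn hpq hpr hsp hneg).elim
  have hchain : ∀ p : R.Edge, R.sort (R.src p) = .sync → (R.typ p).Positive → False := by
    intro p hsp hpp
    refine chain_contra hWF h0 hC hbox hboxes ?_ hsp hpp
    intro f' hf' hp'
    obtain ⟨g, htgtg, hpidx, htypg⟩ := sync_prem hWF hf' rfl
    have hposg : (R.typ g).Positive := by rw [← htypg]; exact hp'
    refine ⟨g, htgtg, ?_, hposg⟩
    cases hsg : R.sort (R.src g) with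
    | ax => exact (syncax_contra hWF h0 hnf hf' rfl htgtg hpidx.symm hposg hsg).elim
    | cut => exact absurd rfl (not_src_cut hWF hsg)
    | one => exact absurd hsg (h0 _).1
    | bot => exact absurd hsg (h0 _).2
    | sync => rfl
    | tens => exact (syncmult_contra hWF h0 hC hnf hf' rfl htgtg hpidx.symm hposg hsg).elim
    | parr =>
      obtain ⟨x1, x2, g2, -, -, -, -, hconcl2, htyp2⟩ := hWF.2.2.2.1 (R.src g) hsg
      have hgg : g = g2 := by
        have : g ∈ R.concls (R.src g) := mem_concls.2 rfl
        rw [hconcl2, Finset.mem_singleton] at this; exact this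
      rw [hgg, htyp2] at hposg
      cases hposg
  have hte : ∀ p : R.Edge, R.sort (R.src p) = .tens →
      ∃ A B, R.typ p = .tens A B := by
    intro p hsp
    obtain ⟨a1, a2, gp, -, -, -, -, hcp, htp⟩ := hWF.2.2.1 (R.src p) hsp
    have : p = gp := by
      have : p ∈ R.concls (R.src p) := mem_concls.2 rfl
      rw [hcp, Finset.mem_singleton] at this; exact this
    exact ⟨_, _, by rw [this, htp]⟩
  have hpe : ∀ p : R.Edge, R.sort (R.src p) = .parr →
      ∃ A B, R.typ p = .parr A B := by
    intro p hsp
    obtain ⟨a1, a2, gp, -, -, -, -, hcp, htp⟩ := hWF.2.2.2.1 (R.src p) hsp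
    have : p = gp := by
      have : p ∈ R.concls (R.src p) := mem_concls.2 rfl
      rw [hcp, Finset.mem_singleton] at this; exact this
    exact ⟨_, _, by rw [this, htp]⟩
  have hprems' : R.prems n = {f, e} := by rw [hprems, Finset.pair_comm]
  rcases key e f hef hprems with h1 | h1 | ⟨h1, h1p⟩
  · rcases key f e hef.symm hprems' with h2 | h2 | ⟨h2, h2p⟩
    · obtain ⟨A, B, hA⟩ := hte e h1
      obtain ⟨C, D, hB⟩ := hte f h2
      rw [hB, hA] at hdual
      simp [Formula.dual] at hdual
    · exact tensparr_contra hWF h0 hnf hn hef hprems h1 h2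
    · exact hchain f h2 h2p
  · rcases key f e hef.symm hprems' with h2 | h2 | ⟨h2, h2p⟩
    · exact tensparr_contra hWF h0 hnf hn hef.symm hprems' h2 h1
    · obtain ⟨A, B, hA⟩ := hpe e h1
      obtain ⟨C, D, hB⟩ := hpe f h2
      rw [hB, hA] at hdual
      simp [Formula.dual] at hdual
    · exact hchain f h2 h2p
  · exact hchain e h1 h1p


/-- **SMLL⁰ Normal Forms.**  If `R` is an SMLL⁰ net (no unit links, hence no
boxes) in normal form for the reduction relation `→`, then `R` is cut-free. -/
theorem smll0_normal_forms_cut_free (R : Struct) (hWF : R.WF) (hC : R.Correct)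
    (h0 : R.UnitFree) (hnf : ∀ Q : Struct, ¬ Step R Q) :
    ∀ n : R.Node, R.sort n ≠ .cut :=
  smll0_normal_forms_cut_free' R hWF hC h0 hnf
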